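/- arXiv:2006.10332 — 12 statements merged into one kernel-verified Lean document; each statement's English description precedes it below -/
import Mathlib

section
/- Consider the energy sharing game with I ≥ 2 prosumers. If (p̂, d̂, b̂) is a generalized Nash equilibrium of the game, then (p̂, d̂) is the unique optimal solution of the regularized problem: minimize Σ_{i=1}^I f_i(p_i) − Σ_{i=1}^I u_i(d_i) + (Σ_{i=1}^I (d_i − p_i)²)/(2a(I−1)) subject to Σ_{i=1}^I p_i = Σ_{i=1}^I d_i and p̲_i ≤ p_i ≤ p̄_i, d̲_i ≤ d_i ≤ d̄_i for all i. -/
open Finset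

/-- Energy sharing price given bids. -/
noncomputable def price (I : ℕ) (a : ℝ) (b : Fin I → ℝ) : ℝ :=
  (∑ j, b j) / (a * I)

/-- Cost of prosumer `i` in the energy sharing game. -/
noncomputable def gamma (I : ℕ) (a : ℝ) (f u : Fin I → ℝ → ℝ) (i : Fin I)
    (p d b : Fin I → ℝ) : ℝ :=
  f i (p i) - u i (d i) + price I a b * (-(a * price I a b) + b i)

/-- Feasibility of prosumer `i`'s part of a profile. -/
def feasOf (I : ℕ) (a : ℝ) (plo phi dlo dhi : Fin I → ℝ) (i : Fin I)
    (p d b : Fin I → ℝ) : Prop :=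
  p i - a * price I a b + b i = d i ∧
    plo i ≤ p i ∧ p i ≤ phi i ∧ dlo i ≤ d i ∧ d i ≤ dhi i

/-- Generalized Nash equilibrium of the energy sharing game. -/
def IsGNE (I : ℕ) (a : ℝ) (f u : Fin I → ℝ → ℝ) (plo phi dlo dhi : Fin I → ℝ)
    (p d b : Fin I → ℝ) : Prop :=
  ∀ i : Fin I,
    feasOf I a plo phi dlo dhi i p d b ∧
    ∀ pi di bi : ℝ,
      feasOf I a plo phi dlo dhi i (Function.update p i pi)
        (Function.update d i di) (Function.update b i bi) →
      gamma I a f u i p d b ≤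
        gamma I a f u i (Function.update p i pi)
          (Function.update d i di) (Function.update b i bi)

/-- Feasible set of the centralized/regularized problem. -/
def centralFeas (I : ℕ) (plo phi dlo dhi : Fin I → ℝ) (p d : Fin I → ℝ) : Prop :=
  (∑ i, p i = ∑ i, d i) ∧
    ∀ i, plo i ≤ p i ∧ p i ≤ phi i ∧ dlo i ≤ d i ∧ d i ≤ dhi i

/-- Objective of the regularized central problem. -/
noncomputable def regObj (I : ℕ) (a : ℝ) (f u : Fin I → ℝ → ℝ)
    (p d : Fin I → ℝ) : ℝ :=
  ∑ i, f i (p i) - ∑ i, u i (d i) +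
    (∑ i, (d i - p i) ^ 2) / (2 * a * ((I : ℝ) - 1))

private lemma convexOn_seg {g : ℝ → ℝ} (h : ConvexOn ℝ Set.univ g) {t : ℝ}
    (ht0 : 0 ≤ t) (ht1 : t ≤ 1) (x y : ℝ) :
    g ((1 - t) * x + t * y) ≤ (1 - t) * g x + t * g y := by
  have := h.2 (Set.mem_univ x) (Set.mem_univ y) (by linarith : (0:ℝ) ≤ 1 - t) ht0 (by ring)
  simpa using this

private lemma concaveOn_seg {g : ℝ → ℝ} (h : ConcaveOn ℝ Set.univ g) {t : ℝ}
    (ht0 : 0 ≤ t) (ht1 : t ≤ 1) (x y : ℝ) :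
    (1 - t) * g x + t * g y ≤ g ((1 - t) * x + t * y) := by
  have := h.2 (Set.mem_univ x) (Set.mem_univ y) (by linarith : (0:ℝ) ≤ 1 - t) ht0 (by ring)
  simpa using this

private lemma convexOn_mid {g : ℝ → ℝ} (h : ConvexOn ℝ Set.univ g) (x y : ℝ) :
    g ((x + y) / 2) ≤ (g x + g y) / 2 := by
  have := convexOn_seg h (by norm_num : (0:ℝ) ≤ 1/2) (by norm_num : (1/2:ℝ) ≤ 1) x y
  have harg : (1 - (1/2:ℝ)) * x + (1/2:ℝ) * y = (x + y)/2 := by ring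
  rw [harg] at this
  linarith

private lemma concaveOn_mid {g : ℝ → ℝ} (h : ConcaveOn ℝ Set.univ g) (x y : ℝ) :
    (g x + g y) / 2 ≤ g ((x + y) / 2) := by
  have := concaveOn_seg h (by norm_num : (0:ℝ) ≤ 1/2) (by norm_num : (1/2:ℝ) ≤ 1) x y
  have harg : (1 - (1/2:ℝ)) * x + (1/2:ℝ) * y = (x + y)/2 := by ring
  rw [harg] at this
  linarith

private lemma strictConvexOn_mid {g : ℝ → ℝ} (h : StrictConvexOn ℝ Set.univ g)
    {x y : ℝ} (hxy : x ≠ y) : g ((x + y) / 2) < (g x + g y) / 2 := by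
  have := h.2 (Set.mem_univ x) (Set.mem_univ y) hxy one_half_pos one_half_pos (by norm_num)
  simp only [smul_eq_mul] at this
  have harg : (1/2:ℝ) * x + (1/2:ℝ) * y = (x + y)/2 := by ring
  rw [harg] at this
  linarith

private lemma strictConcaveOn_mid {g : ℝ → ℝ} (h : StrictConcaveOn ℝ Set.univ g)
    {x y : ℝ} (hxy : x ≠ y) : (g x + g y) / 2 < g ((x + y) / 2) := by
  have := h.2 (Set.mem_univ x) (Set.mem_univ y) hxy one_half_pos one_half_pos (by norm_num)
  simp only [smul_eq_mul] at this
  have harg : (1/2:ℝ) * x + (1/2:ℝ) * y = (x + y)/2 := by ring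
  rw [harg] at this
  linarith

private lemma seg_mem_lo {t lo x y : ℝ} (ht0 : 0 ≤ t) (ht1 : t ≤ 1)
    (hx : lo ≤ x) (hy : lo ≤ y) : lo ≤ (1 - t) * x + t * y := by nlinarith

private lemma seg_mem_hi {t hi x y : ℝ} (ht0 : 0 ≤ t) (ht1 : t ≤ 1)
    (hx : x ≤ hi) (hy : y ≤ hi) : (1 - t) * x + t * y ≤ hi := by nlinarith

set_option maxHeartbeats 1600000 in
/-- At any GNE, `(p̂, d̂)` is the unique optimal solution of the regularized problem. -/
theorem gne_is_unique_regularized_optimum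
    (I : ℕ) (hI : 2 ≤ I) (a : ℝ) (ha : 0 < a)
    (f u : Fin I → ℝ → ℝ) (plo phi dlo dhi : Fin I → ℝ)
    (hf : ∀ i, ContDiff ℝ 2 (f i)) (hfc : ∀ i, StrictConvexOn ℝ Set.univ (f i))
    (hu : ∀ i, ContDiff ℝ 2 (u i)) (huc : ∀ i, StrictConcaveOn ℝ Set.univ (u i))
    (hpb : ∀ i, plo i ≤ phi i) (hdb : ∀ i, dlo i ≤ dhi i)
    (phat dhat bhat : Fin I → ℝ)
    (hGNE : IsGNE I a f u plo phi dlo dhi phat dhat bhat) :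
    centralFeas I plo phi dlo dhi phat dhat ∧
      (∀ p d : Fin I → ℝ, centralFeas I plo phi dlo dhi p d →
        regObj I a f u phat dhat ≤ regObj I a f u p d) ∧
      (∀ p d : Fin I → ℝ, centralFeas I plo phi dlo dhi p d →
        regObj I a f u p d = regObj I a f u phat dhat → p = phat ∧ d = dhat) := by
  have hI2 : (2:ℝ) ≤ (I:ℝ) := by exact_mod_cast hI
  have ha0 : a ≠ 0 := ne_of_gt ha
  have hIne : (I:ℝ) ≠ 0 := by linarith
  have hI1ne : (I:ℝ) - 1 ≠ 0 := by linarith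
  set S : ℝ := ∑ j, bhat j with hS
  set lam : ℝ := S / (a * (I:ℝ)) with hlamdef
  set c : ℝ := a * ((I:ℝ) - 1) with hcdef
  have hc : 0 < c := by rw [hcdef]; nlinarith
  have hcne : c ≠ 0 := ne_of_gt hc
  have hpr : price I a bhat = lam := by rw [hlamdef, hS]; rfl
  have hfeq : ∀ i, phat i - a * lam + bhat i = dhat i := by
    intro i
    have h := (hGNE i).1.1
    rw [hpr] at h
    exact h
  have hfeasb : ∀ i, plo i ≤ phat i ∧ phat i ≤ phi i ∧ dlo i ≤ dhat i ∧ dhat i ≤ dhi i :=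
    fun i => (hGNE i).1.2
  have hSlam : a * (I:ℝ) * lam = S := by rw [hlamdef]; field_simp
  have hsum : ∑ i, phat i = ∑ i, dhat i := by
    have h1 : ∑ i, (phat i - a * lam + bhat i) = ∑ i, dhat i :=
      Finset.sum_congr rfl (fun i _ => hfeq i)
    rw [Finset.sum_add_distrib, Finset.sum_sub_distrib, Finset.sum_const, Finset.card_univ,
      Fintype.card_fin, nsmul_eq_mul, ← hS] at h1
    nlinarith [h1, hSlam]
  have hBq : ∀ i, S - bhat i = c * lam - (dhat i - phat i) := by
    intro i
    rw [hcdef]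
    linear_combination -hSlam - hfeq i
  have hreg : ∀ q e : Fin I → ℝ,
      regObj I a f u q e = ∑ i, (f i (q i) - u i (e i) + (e i - q i)^2/(2*c)) := by
    intro q e
    unfold regObj
    rw [show (2*a*((I:ℝ)-1)) = 2*c by rw [hcdef]; ring]
    rw [Finset.sum_add_distrib, Finset.sum_sub_distrib, ← Finset.sum_div]
  -- per-prosumer minimality after eliminating the bid
  have hmin : ∀ i : Fin I, ∀ x y : ℝ, plo i ≤ x → x ≤ phi i → dlo i ≤ y → y ≤ dhi i →
      f i (phat i) - u i (dhat i) +
        ((dhat i - phat i)^2 + (S - bhat i)*(dhat i - phat i))/c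
      ≤ f i x - u i y + ((y - x)^2 + (S - bhat i)*(y - x))/c := by
    intro i x y h1 h2 h3 h4
    set bi : ℝ := ((I:ℝ)*(y - x) + (S - bhat i))/((I:ℝ) - 1) with hbi
    have hupd : ∑ j, Function.update bhat i bi j = S - bhat i + bi := by
      rw [Finset.sum_update_of_mem (mem_univ i), Finset.sdiff_singleton_eq_erase,
        Finset.sum_erase_eq_sub (mem_univ i), ← hS]
      ring
    have hprice : price I a (Function.update bhat i bi) = (S - bhat i + bi)/(a*(I:ℝ)) := by
      unfold price
      rw [hupd]
    have hfeas' : feasOf I a plo phi dlo dhi i (Function.update phat i x)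
        (Function.update dhat i y) (Function.update bhat i bi) := by
      refine ⟨?_, ?_, ?_, ?_, ?_⟩
      · rw [Function.update_self, Function.update_self, Function.update_self, hprice, hbi]
        field_simp
        ring
      all_goals simp only [Function.update_self]
      exacts [h1, h2, h3, h4]
    have hle := (hGNE i).2 x y bi hfeas'
    have hL : gamma I a f u i phat dhat bhat
        = f i (phat i) - u i (dhat i) +
          ((dhat i - phat i)^2 + (S - bhat i)*(dhat i - phat i))/c := by
      unfold gamma
      rw [hpr]
      have h5 : -(a * lam) + bhat i = dhat i - phat i := by linarith [hfeq i]
      rw [h5, hBq i]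
      field_simp
      ring
    have hR : gamma I a f u i (Function.update phat i x) (Function.update dhat i y)
          (Function.update bhat i bi)
        = f i x - u i y + ((y - x)^2 + (S - bhat i)*(y - x))/c := by
      unfold gamma
      rw [hprice]
      simp only [Function.update_self]
      rw [hbi, hcdef]
      field_simp
      ring
    rw [hL, hR] at hle
    exact hle
  -- the key identity relating the central objective with the prosumers' objectives
  have hid : ∀ q e : Fin I → ℝ, (∑ i, q i = ∑ i, e i) →
      regObj I a f u q e
        = (∑ i, (f i (q i) - u i (e i) + ((e i - q i)^2 + (S - bhat i)*(e i - q i))/c))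
          + (∑ i, (dhat i - phat i)^2)/(2*c)
          - (∑ i, ((e i - q i) - (dhat i - phat i))^2)/(2*c) := by
    intro q e hqe
    have hw0 : ∑ i, (e i - q i) = 0 := by
      rw [Finset.sum_sub_distrib, hqe]
      ring
    have hterm : ∀ i ∈ univ,
        (f i (q i) - u i (e i) + ((e i - q i)^2 + (S - bhat i)*(e i - q i))/c)
        = (f i (q i) - u i (e i) + (e i - q i)^2/(2*c)) + lam*(e i - q i)
          + ((e i - q i) - (dhat i - phat i))^2/(2*c) - (dhat i - phat i)^2/(2*c) := by
      intro i _
      rw [hBq i]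
      field_simp
      ring
    rw [Finset.sum_congr rfl hterm, Finset.sum_sub_distrib, Finset.sum_add_distrib,
      Finset.sum_add_distrib, ← Finset.mul_sum, hw0, ← hreg q e, ← Finset.sum_div,
      ← Finset.sum_div]
    ring
  -- optimality
  have hopt : ∀ p d : Fin I → ℝ, centralFeas I plo phi dlo dhi p d →
      regObj I a f u phat dhat ≤ regObj I a f u p d := by
    intro p d hfd
    obtain ⟨hpd, hbox⟩ := hfd
    have key : ∀ t : ℝ, 0 < t → t ≤ 1 →
        regObj I a f u phat dhat ≤ regObj I a f u p d
          + t * ((∑ i, ((d i - p i) - (dhat i - phat i))^2)/(2*c)) := by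
      intro t ht0 ht1
      have ht0' : (0:ℝ) ≤ t := le_of_lt ht0
      have hsum_t : ∑ i, ((1-t)*phat i + t*p i) = ∑ i, ((1-t)*dhat i + t*d i) := by
        rw [Finset.sum_add_distrib, Finset.sum_add_distrib, ← Finset.mul_sum, ← Finset.mul_sum,
          ← Finset.mul_sum, ← Finset.mul_sum, hsum, hpd]
      have hidt : regObj I a f u (fun i => (1-t)*phat i + t*p i) (fun i => (1-t)*dhat i + t*d i)
          = (∑ i, (f i ((1-t)*phat i + t*p i) - u i ((1-t)*dhat i + t*d i)
              + ((((1-t)*dhat i + t*d i) - ((1-t)*phat i + t*p i))^2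
                + (S - bhat i)*(((1-t)*dhat i + t*d i) - ((1-t)*phat i + t*p i)))/c))
            + (∑ i, (dhat i - phat i)^2)/(2*c)
            - (∑ i, ((((1-t)*dhat i + t*d i) - ((1-t)*phat i + t*p i)) - (dhat i - phat i))^2)/(2*c) :=
        hid _ _ hsum_t
      have hDq : (∑ i, ((((1-t)*dhat i + t*d i) - ((1-t)*phat i + t*p i)) - (dhat i - phat i))^2)
          = t^2 * ∑ i, ((d i - p i) - (dhat i - phat i))^2 := by
        rw [Finset.mul_sum]
        exact Finset.sum_congr rfl (fun i _ => by ring)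
      have hDq' : (∑ i, ((((1-t)*dhat i + t*d i) - ((1-t)*phat i + t*p i)) - (dhat i - phat i))^2)/(2*c)
          = t * (t * ((∑ i, ((d i - p i) - (dhat i - phat i))^2)/(2*c))) := by
        rw [hDq]; ring
      rw [hDq'] at hidt
      have hid0 := hid phat dhat hsum
      have hz : (∑ i, ((dhat i - phat i) - (dhat i - phat i))^2) = 0 :=
        Finset.sum_eq_zero (fun i _ => by ring)
      rw [hz, zero_div] at hid0
      have hφ : ∀ i ∈ univ,
          (f i (phat i) - u i (dhat i) +
            ((dhat i - phat i)^2 + (S - bhat i)*(dhat i - phat i))/c)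
          ≤ (f i ((1-t)*phat i + t*p i) - u i ((1-t)*dhat i + t*d i)
            + ((((1-t)*dhat i + t*d i) - ((1-t)*phat i + t*p i))^2
              + (S - bhat i)*(((1-t)*dhat i + t*d i) - ((1-t)*phat i + t*p i)))/c) := by
        intro i _
        obtain ⟨a1, a2, a3, a4⟩ := hbox i
        obtain ⟨b1, b2, b3, b4⟩ := hfeasb i
        exact hmin i _ _ (seg_mem_lo ht0' ht1 b1 a1) (seg_mem_hi ht0' ht1 b2 a2)
          (seg_mem_lo ht0' ht1 b3 a3) (seg_mem_hi ht0' ht1 b4 a4)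
      have hφsum := Finset.sum_le_sum hφ
      have hconv : regObj I a f u (fun i => (1-t)*phat i + t*p i) (fun i => (1-t)*dhat i + t*d i)
          ≤ (1-t)*regObj I a f u phat dhat + t*regObj I a f u p d := by
        rw [hreg, hreg, hreg, Finset.mul_sum, Finset.mul_sum, ← Finset.sum_add_distrib]
        have hterm : ∀ i ∈ univ,
            (f i ((1-t)*phat i + t*p i) - u i ((1-t)*dhat i + t*d i)
              + (((1-t)*dhat i + t*d i) - ((1-t)*phat i + t*p i))^2/(2*c))
            ≤ (1-t)*(f i (phat i) - u i (dhat i) + (dhat i - phat i)^2/(2*c))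
              + t*(f i (p i) - u i (d i) + (d i - p i)^2/(2*c)) := by
          intro i _
          have h1 := convexOn_seg (hfc i).convexOn ht0' ht1 (phat i) (p i)
          have h2 := concaveOn_seg (huc i).concaveOn ht0' ht1 (dhat i) (d i)
          have h3 : (((1-t)*dhat i + t*d i) - ((1-t)*phat i + t*p i))^2
              ≤ (1-t)*(dhat i - phat i)^2 + t*(d i - p i)^2 := by
            nlinarith [mul_nonneg (mul_nonneg ht0' (by linarith : (0:ℝ) ≤ 1 - t))
              (sq_nonneg ((dhat i - phat i) - (d i - p i)))]
          have h4 : (((1-t)*dhat i + t*d i) - ((1-t)*phat i + t*p i))^2/(2*c)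
              ≤ ((1-t)*(dhat i - phat i)^2 + t*(d i - p i)^2)/(2*c) := by
            gcongr
          have h5 : ((1-t)*(dhat i - phat i)^2 + t*(d i - p i)^2)/(2*c)
              = (1-t)*((dhat i - phat i)^2/(2*c)) + t*((d i - p i)^2/(2*c)) := by ring
          linarith
        exact Finset.sum_le_sum hterm
      have h6 : t * regObj I a f u phat dhat
          ≤ t * (regObj I a f u p d
            + t * ((∑ i, ((d i - p i) - (dhat i - phat i))^2)/(2*c))) := by
        linarith [hφsum, hid0, hidt, hconv]
      exact le_of_mul_le_mul_left h6 ht0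
    have hK0 : 0 ≤ (∑ i, ((d i - p i) - (dhat i - phat i))^2)/(2*c) := by
      apply div_nonneg _ (by linarith)
      exact Finset.sum_nonneg (fun i _ => sq_nonneg _)
    refine le_of_forall_pos_le_add ?_
    intro ε hε
    set K : ℝ := (∑ i, ((d i - p i) - (dhat i - phat i))^2)/(2*c) with hK
    have hKp : (0:ℝ) < K + 1 := by linarith
    have ht1 : min 1 (ε/(K+1)) ≤ 1 := min_le_left _ _
    have ht0 : 0 < min 1 (ε/(K+1)) := lt_min one_pos (div_pos hε hKp)
    have h7 := key _ ht0 ht1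
    have h8 : min 1 (ε/(K+1)) * K ≤ ε := by
      have h9 : min 1 (ε/(K+1)) ≤ ε/(K+1) := min_le_right _ _
      have h10 : (ε/(K+1)) * (K+1) = ε := div_mul_cancel₀ ε (ne_of_gt hKp)
      nlinarith [mul_le_mul_of_nonneg_right h9 hK0]
    linarith
  refine ⟨⟨hsum, hfeasb⟩, hopt, ?_⟩
  -- uniqueness
  intro p d hfd heq
  obtain ⟨hpd, hbox⟩ := hfd
  by_contra hne
  have hex : ∃ i, p i ≠ phat i ∨ d i ≠ dhat i := by
    by_contra h
    push_neg at h
    exact hne ⟨funext (fun i => (h i).1), funext (fun i => (h i).2)⟩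
  obtain ⟨i0, hi0⟩ := hex
  have hmidfeas : centralFeas I plo phi dlo dhi
      (fun i => (p i + phat i)/2) (fun i => (d i + dhat i)/2) := by
    constructor
    · rw [← Finset.sum_div, ← Finset.sum_div, Finset.sum_add_distrib, Finset.sum_add_distrib,
        hpd, hsum]
    · intro i
      obtain ⟨a1, a2, a3, a4⟩ := hbox i
      obtain ⟨b1, b2, b3, b4⟩ := hfeasb i
      exact ⟨by linarith, by linarith, by linarith, by linarith⟩
  have hge := hopt _ _ hmidfeas
  have hqd : ∀ i : Fin I, ((d i + dhat i)/2 - (p i + phat i)/2)^2/(2*c)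
      ≤ ((d i - p i)^2/(2*c) + (dhat i - phat i)^2/(2*c))/2 := by
    intro i
    rw [show ((d i - p i)^2/(2*c) + (dhat i - phat i)^2/(2*c))/2
        = (((d i - p i)^2 + (dhat i - phat i)^2)/2)/(2*c) by ring]
    gcongr
    nlinarith [sq_nonneg ((d i - p i) - (dhat i - phat i))]
  have hlt2 : ∑ i, (f i ((p i + phat i)/2) - u i ((d i + dhat i)/2)
        + ((d i + dhat i)/2 - (p i + phat i)/2)^2/(2*c))
      < ∑ i, ((f i (p i) - u i (d i) + (d i - p i)^2/(2*c))/2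
        + (f i (phat i) - u i (dhat i) + (dhat i - phat i)^2/(2*c))/2) := by
    apply Finset.sum_lt_sum
    · intro i _
      have h1 := convexOn_mid (hfc i).convexOn (p i) (phat i)
      have h2 := concaveOn_mid (huc i).concaveOn (d i) (dhat i)
      have h3 := hqd i
      linarith
    · refine ⟨i0, mem_univ i0, ?_⟩
      have h3 := hqd i0
      rcases hi0 with h | h
      · have h1 := strictConvexOn_mid (hfc i0) h
        have h2 := concaveOn_mid (huc i0).concaveOn (d i0) (dhat i0)
        linarith
      · have h1 := convexOn_mid (hfc i0).convexOn (p i0) (phat i0)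
        have h2 := strictConcaveOn_mid (huc i0) h
        linarith
  have e1 : regObj I a f u (fun i => (p i + phat i)/2) (fun i => (d i + dhat i)/2)
      = ∑ i, (f i ((p i + phat i)/2) - u i ((d i + dhat i)/2)
        + ((d i + dhat i)/2 - (p i + phat i)/2)^2/(2*c)) := hreg _ _
  have e2 := hreg p d
  have e3 := hreg phat dhat
  have hsplit : ∑ i, ((f i (p i) - u i (d i) + (d i - p i)^2/(2*c))/2
        + (f i (phat i) - u i (dhat i) + (dhat i - phat i)^2/(2*c))/2)
      = (∑ i, (f i (p i) - u i (d i) + (d i - p i)^2/(2*c)))/2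
        + (∑ i, (f i (phat i) - u i (dhat i) + (dhat i - phat i)^2/(2*c)))/2 := by
    rw [Finset.sum_add_distrib, ← Finset.sum_div, ← Finset.sum_div]
  linarith [hge, hlt2, heq, e1, e2, e3, hsplit]
end

section
/- Let I ≥ 2 be an integer, a > 0, and let p, d, b ∈ ℝ^I satisfy b_i = d_i − p_i + (d_i − p_i + Σ_{j≠i} b_j)/(I−1) for every i ∈ {1,…,I}. Then Σ_{i=1}^I p_i = Σ_{i=1}^I d_i, and the quantities ζ_i := (d_i − p_i + Σ_{j≠i} b_j)/((I−1)·a) are equal for all i; moreover each ζ_i equals (Σ_{j=1}^I b_j)/(aI). -/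
open Finset

/-- Consistency of equilibrium bids: if every prosumer's bid satisfies
`b_i = d_i − p_i + (d_i − p_i + Σ_{j≠i} b_j)/(I−1)`, then total production equals total
demand, and the quantities `ζ_i = (d_i − p_i + Σ_{j≠i} b_j)/((I−1)a)` are all equal to the
sharing price `(Σ_j b_j)/(aI)`. -/
theorem equilibrium_bid_consistency
    (I : ℕ) (hI : 2 ≤ I) (a : ℝ) (ha : 0 < a)
    (p d b : Fin I → ℝ)
    (hb : ∀ i : Fin I,
      b i = d i - p i + (d i - p i + ∑ j ∈ Finset.univ.erase i, b j) / ((I : ℝ) - 1)) :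
    (∑ i, p i = ∑ i, d i) ∧
      (∀ i j : Fin I,
        (d i - p i + ∑ k ∈ Finset.univ.erase i, b k) / (((I : ℝ) - 1) * a) =
          (d j - p j + ∑ k ∈ Finset.univ.erase j, b k) / (((I : ℝ) - 1) * a)) ∧
      (∀ i : Fin I,
        (d i - p i + ∑ k ∈ Finset.univ.erase i, b k) / (((I : ℝ) - 1) * a) =
          (∑ j, b j) / (a * I)) := by
  have hN2 : (2 : ℝ) ≤ (I : ℝ) := by exact_mod_cast hI
  have hN0 : (I : ℝ) ≠ 0 := by linarith
  have hN1 : (I : ℝ) - 1 ≠ 0 := by linarith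
  set s : ℝ := ∑ j, b j with hs
  have herase : ∀ i : Fin I, ∑ j ∈ Finset.univ.erase i, b j = s - b i := by
    intro i
    have := Finset.add_sum_erase Finset.univ b (Finset.mem_univ i)
    linarith [this]
  -- key: b i = d i - p i + s / I
  have hkey : ∀ i : Fin I, b i = d i - p i + s / I := by
    intro i
    have h := hb i
    rw [herase i] at h
    field_simp at h ⊢
    ring_nf at h ⊢
    linarith
  have hsum : ∑ i, p i = ∑ i, d i := by
    have h1 : s = ∑ i, (d i - p i + s / I) := by
      rw [hs]; exact Finset.sum_congr rfl fun i _ => hkey i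
    have h2 : ∑ i, (d i - p i + s / I) = ∑ i, d i - ∑ i, p i + s := by
      rw [Finset.sum_add_distrib, Finset.sum_sub_distrib, Finset.sum_const,
        Finset.card_univ, Fintype.card_fin, nsmul_eq_mul]
      field_simp
    have := h1.trans h2
    linarith
  -- each numerator equals s * (I-1) / I
  have hnum : ∀ i : Fin I, d i - p i + ∑ k ∈ Finset.univ.erase i, b k
      = s * ((I : ℝ) - 1) / I := by
    intro i
    rw [herase i]
    have h := hkey i
    field_simp at h ⊢
    linarith
  refine ⟨hsum, ?_, ?_⟩
  · intro i j; rw [hnum i, hnum j]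
  · intro i
    rw [hnum i]
    field_simp
end

section
/- Consider the energy sharing game with I ≥ 2 prosumers, and suppose that for every i the self-sufficiency problem — minimize f_i(p_i) − u_i(d_i) subject to p_i = d_i, p̲_i ≤ p_i ≤ p̄_i, d̲_i ≤ d_i ≤ d̄_i — is feasible, with (unique) optimal solution (p̌_i, ď_i). Let (p̂, d̂, b̂) be a generalized Nash equilibrium. Then for every i, f_i(p̌_i) − u_i(ď_i) ≥ Γ_i(p̂, d̂, b̂); moreover, the inequality is strict for at least one i unless (p̌, ď) = (p̂, d̂). -/
open Finset

private lemma sum_update_univ {I : ℕ} (b : Fin I → ℝ) (i : Fin I) (x : ℝ) :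
    ∑ j, Function.update b i x j = (∑ j, b j) - b i + x := by
  rw [Finset.sum_update_of_mem (Finset.mem_univ i), Finset.sdiff_singleton_eq_erase,
    Finset.sum_erase_eq_sub (Finset.mem_univ i)]
  ring

/-- Pareto improvement: at a GNE no prosumer is worse off than under self-sufficiency,
and at least one is strictly better off unless the two solutions coincide. -/
theorem gne_pareto_improvement
    (I : ℕ) (hI : 2 ≤ I) (a : ℝ) (ha : 0 < a)
    (f u : Fin I → ℝ → ℝ) (plo phi dlo dhi : Fin I → ℝ)
    (hf : ∀ i, ContDiff ℝ 2 (f i)) (hfc : ∀ i, StrictConvexOn ℝ Set.univ (f i))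
    (hu : ∀ i, ContDiff ℝ 2 (u i)) (huc : ∀ i, StrictConcaveOn ℝ Set.univ (u i))
    (hpb : ∀ i, plo i ≤ phi i) (hdb : ∀ i, dlo i ≤ dhi i)
    -- self-sufficiency optimal solution (p̌, ď)
    (pc dc : Fin I → ℝ)
    (hself_eq : ∀ i, pc i = dc i)
    (hself_feas : ∀ i, plo i ≤ pc i ∧ pc i ≤ phi i ∧ dlo i ≤ dc i ∧ dc i ≤ dhi i)
    (hself_opt : ∀ i, ∀ x : ℝ,
      plo i ≤ x → x ≤ phi i → dlo i ≤ x → x ≤ dhi i →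
      f i (pc i) - u i (dc i) ≤ f i x - u i x)
    (hself_unique : ∀ i, ∀ x : ℝ,
      plo i ≤ x → x ≤ phi i → dlo i ≤ x → x ≤ dhi i →
      f i x - u i x = f i (pc i) - u i (dc i) → x = pc i)
    -- the GNE (p̂, d̂, b̂)
    (phat dhat bhat : Fin I → ℝ)
    (hGNE : IsGNE I a f u plo phi dlo dhi phat dhat bhat) :
    (∀ i, gamma I a f u i phat dhat bhat ≤ f i (pc i) - u i (dc i)) ∧
      ((pc, dc) ≠ (phat, dhat) →
        ∃ i, gamma I a f u i phat dhat bhat < f i (pc i) - u i (dc i)) := by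
  have hIR : (2:ℝ) ≤ (I:ℝ) := by exact_mod_cast hI
  have hI0 : (0:ℝ) < (I:ℝ) := by linarith
  have hIne : (I:ℝ) ≠ 0 := ne_of_gt hI0
  have hane : a ≠ 0 := ne_of_gt ha
  have hIm1 : (0:ℝ) < (I:ℝ) - 1 := by linarith
  have hIm1ne : (I:ℝ) - 1 ≠ 0 := ne_of_gt hIm1
  -- The main per-prosumer facts
  have key : ∀ i : Fin I,
      gamma I a f u i phat dhat bhat ≤ f i (pc i) - u i (dc i) ∧
      (gamma I a f u i phat dhat bhat = f i (pc i) - u i (dc i) →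
        phat i = pc i ∧ dhat i = dc i) := by
    intro i
    set s : ℝ := (∑ j, bhat j) - bhat i with hs_def
    have hprice_upd : ∀ bi : ℝ,
        price I a (Function.update bhat i bi) = (s + bi) / (a * I) := by
      intro bi
      unfold price
      rw [sum_update_univ, hs_def]
    have haprice : ∀ x : ℝ, a * ((s + x) / (a * I)) = (s + x) / (I:ℝ) := by
      intro x; field_simp
    have hgamma_upd : ∀ pi di bi : ℝ,
        gamma I a f u i (Function.update phat i pi) (Function.update dhat i di)
          (Function.update bhat i bi)
        = f i pi - u i di + ((s + bi) / (a * I)) * (-((s + bi) / (I:ℝ)) + bi) := by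
      intro pi di bi
      simp only [gamma, hprice_upd, Function.update_self, haprice]
    have hgamma_self : gamma I a f u i phat dhat bhat
        = f i (phat i) - u i (dhat i)
          + ((s + bhat i) / (a * I)) * (-((s + bhat i) / (I:ℝ)) + bhat i) := by
      have hp : price I a bhat = (s + bhat i) / (a * I) := by
        unfold price; rw [hs_def]; ring_nf
      simp only [gamma, hp, haprice]
    -- the self-sufficiency bid
    set b₁ : ℝ := s / ((I:ℝ) - 1) with hb₁_def
    have hb₁ : (s + b₁) / (I:ℝ) = b₁ := by
      rw [hb₁_def]; field_simp; ring
    have hfeas₁ : feasOf I a plo phi dlo dhi i (Function.update phat i (pc i))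
        (Function.update dhat i (dc i)) (Function.update bhat i b₁) := by
      refine ⟨?_, ?_, ?_, ?_, ?_⟩ <;>
        simp only [Function.update_self, hprice_upd, haprice, hb₁]
      · rw [hself_eq i]; ring
      · exact (hself_feas i).1
      · exact (hself_feas i).2.1
      · exact (hself_feas i).2.2.1
      · exact (hself_feas i).2.2.2
    have hle : gamma I a f u i phat dhat bhat ≤ f i (pc i) - u i (dc i) := by
      have h := (hGNE i).2 (pc i) (dc i) b₁ hfeas₁
      rw [hgamma_upd, hb₁] at h
      simpa using h
    refine ⟨hle, ?_⟩
    intro heq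
    by_contra hne
    -- midpoint deviation
    set pm : ℝ := (phat i + pc i) / 2 with hpm_def
    set dm : ℝ := (dhat i + dc i) / 2 with hdm_def
    set bm : ℝ := (bhat i + b₁) / 2 with hbm_def
    have hfeasGNE := (hGNE i).1
    have eq1 : phat i - (s + bhat i) / (I:ℝ) + bhat i = dhat i := by
      have h := hfeasGNE.1
      have hp : price I a bhat = (s + bhat i) / (a * I) := by
        unfold price; rw [hs_def]; ring_nf
      rw [hp, haprice] at h
      exact h
    have hfeasm : feasOf I a plo phi dlo dhi i (Function.update phat i pm)
        (Function.update dhat i dm) (Function.update bhat i bm) := by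
      have hb1 := hfeasGNE.2.1
      have hb2 := hfeasGNE.2.2.1
      have hb3 := hfeasGNE.2.2.2.1
      have hb4 := hfeasGNE.2.2.2.2
      have hc := hself_feas i
      have heqc : pc i - (s + b₁) / (I:ℝ) + b₁ = dc i := by
        rw [hb₁, hself_eq i]; ring
      refine ⟨?_, ?_, ?_, ?_, ?_⟩ <;>
        simp only [Function.update_self, hprice_upd, haprice]
      · have : (s + bm) / (I:ℝ) = ((s + bhat i) / (I:ℝ) + (s + b₁) / (I:ℝ)) / 2 := by
          rw [hbm_def]; ring
        rw [this, hpm_def, hdm_def]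
        linarith [eq1, heqc]
      · rw [hpm_def]; linarith [hc.1]
      · rw [hpm_def]; linarith [hc.2.1]
      · rw [hdm_def]; linarith [hc.2.2.1]
      · rw [hdm_def]; linarith [hc.2.2.2]
    have hGm := (hGNE i).2 pm dm bm hfeasm
    rw [hgamma_upd] at hGm
    -- convexity bounds
    have hQconv : ((s + bm) / (a * I)) * (-((s + bm) / (I:ℝ)) + bm)
        ≤ (((s + bhat i) / (a * I)) * (-((s + bhat i) / (I:ℝ)) + bhat i)
           + ((s + b₁) / (a * I)) * (-((s + b₁) / (I:ℝ)) + b₁)) / 2 := by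
      have hkey : (((s + bhat i) / (a * I)) * (-((s + bhat i) / (I:ℝ)) + bhat i)
           + ((s + b₁) / (a * I)) * (-((s + b₁) / (I:ℝ)) + b₁)) / 2
          - ((s + bm) / (a * I)) * (-((s + bm) / (I:ℝ)) + bm)
          = ((I:ℝ) - 1) * (bhat i - b₁) ^ 2 / (4 * a * (I:ℝ) ^ 2) := by
        rw [hbm_def]; field_simp; ring
      nlinarith [sq_nonneg (bhat i - b₁), mul_pos (mul_pos (by norm_num : (0:ℝ) < 4) ha)
        (pow_pos hI0 2), div_nonneg (mul_nonneg (le_of_lt hIm1) (sq_nonneg (bhat i - b₁)))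
        (le_of_lt (mul_pos (mul_pos (by norm_num : (0:ℝ) < 4) ha) (pow_pos hI0 2)))]
    have hfconv : f i pm ≤ (f i (phat i) + f i (pc i)) / 2 := by
      have h := (hfc i).convexOn.2 (Set.mem_univ (phat i)) (Set.mem_univ (pc i))
        (by norm_num : (0:ℝ) ≤ 1/2) (by norm_num : (0:ℝ) ≤ 1/2) (by norm_num)
      simp only [smul_eq_mul] at h
      have e1 : (1/2 : ℝ) * phat i + (1/2 : ℝ) * pc i = pm := by rw [hpm_def]; ring
      rw [e1] at h; linarith
    have huconv : (u i (dhat i) + u i (dc i)) / 2 ≤ u i dm := by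
      have h := (huc i).concaveOn.2 (Set.mem_univ (dhat i)) (Set.mem_univ (dc i))
        (by norm_num : (0:ℝ) ≤ 1/2) (by norm_num : (0:ℝ) ≤ 1/2) (by norm_num)
      simp only [smul_eq_mul] at h
      have e1 : (1/2 : ℝ) * dhat i + (1/2 : ℝ) * dc i = dm := by rw [hdm_def]; ring
      rw [e1] at h; linarith
    -- strictness in at least one of f, u
    have hstrict : f i pm - u i dm < (f i (phat i) + f i (pc i)) / 2
        - (u i (dhat i) + u i (dc i)) / 2 := by
      rcases not_and_or.mp hne with hp | hd
      · have h := (hfc i).2 (Set.mem_univ (phat i)) (Set.mem_univ (pc i)) hp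
          (by norm_num : (0:ℝ) < 1/2) (by norm_num : (0:ℝ) < 1/2) (by norm_num)
        simp only [smul_eq_mul] at h
        have e1 : (1/2 : ℝ) * phat i + (1/2 : ℝ) * pc i = pm := by rw [hpm_def]; ring
        rw [e1] at h; linarith
      · have h := (huc i).2 (Set.mem_univ (dhat i)) (Set.mem_univ (dc i)) hd
          (by norm_num : (0:ℝ) < 1/2) (by norm_num : (0:ℝ) < 1/2) (by norm_num)
        simp only [smul_eq_mul] at h
        have e1 : (1/2 : ℝ) * dhat i + (1/2 : ℝ) * dc i = dm := by rw [hdm_def]; ring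
        rw [e1] at h; linarith
    -- the two endpoint values both equal gamma at the GNE
    have hQ₁ : ((s + b₁) / (a * I)) * (-((s + b₁) / (I:ℝ)) + b₁) = 0 := by
      rw [hb₁]; ring
    -- combine
    have hVc : f i (pc i) - u i (dc i)
        = f i (pc i) - u i (dc i) + ((s + b₁) / (a * I)) * (-((s + b₁) / (I:ℝ)) + b₁) := by
      rw [hQ₁]; ring
    have hVhat : gamma I a f u i phat dhat bhat
        = f i (phat i) - u i (dhat i)
          + ((s + bhat i) / (a * I)) * (-((s + bhat i) / (I:ℝ)) + bhat i) := hgamma_self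
    linarith [hGm, hQconv, hstrict, heq]
  constructor
  · exact fun i => (key i).1
  · intro hne
    by_contra hns
    push_neg at hns
    apply hne
    have hall : ∀ i, phat i = pc i ∧ dhat i = dc i := by
      intro i
      exact (key i).2 (le_antisymm ((key i).1) (hns i))
    have hpc : pc = phat := funext fun i => ((hall i).1).symm
    have hdc : dc = dhat := funext fun i => ((hall i).2).symm
    rw [hpc, hdc]
end

section
/- Let I ≥ 2, a > 0, and let S ⊆ ℝ^I × ℝ^I be the set of pairs (p, d) with Σ_{i=1}^I p_i = Σ_{i=1}^I d_i and p̲_i ≤ p_i ≤ p̄_i, d̲_i ≤ d_i ≤ d̄_i for all i, assumed nonempty. Define J(p, d) = Σ_{i=1}^I [f_i(p_i) − u_i(d_i)] and Ω(p, d) = Σ_{i=1}^I (d_i − p_i)². Let (p̃, d̃) minimize J over S and let (p̂, d̂) minimize J + Ω/(2a(I−1)) over S. If C₁ ≥ max(|p̲_i − d̄_i|², |p̄_i − d̲_i|²) for all i, then J(p̂, d̂) ≤ J(p̃, d̃) + C₁·I/(a(I−1)). -/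
open Finset

/-- Total net cost. -/
noncomputable def totalCost (I : ℕ) (f u : Fin I → ℝ → ℝ) (p d : Fin I → ℝ) : ℝ :=
  ∑ i, (f i (p i) - u i (d i))

/-- Regularization term. -/
noncomputable def omegaReg (I : ℕ) (p d : Fin I → ℝ) : ℝ :=
  ∑ i, (d i - p i) ^ 2

/-- The gap between the net cost at the energy sharing equilibrium and the
centralized social optimum is at most `C₁ I / (a (I − 1))`. -/
theorem sharing_cost_gap
    (I : ℕ) (hI : 2 ≤ I) (a : ℝ) (ha : 0 < a)
    (f u : Fin I → ℝ → ℝ) (plo phi dlo dhi : Fin I → ℝ)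
    (hfcont : ∀ i, Continuous (f i)) (hucont : ∀ i, Continuous (u i))
    (C1 : ℝ)
    (hC1 : ∀ i, |plo i - dhi i| ^ 2 ≤ C1 ∧ |phi i - dlo i| ^ 2 ≤ C1)
    (ptil dtil phat dhat : Fin I → ℝ)
    (htilFeas : centralFeas I plo phi dlo dhi ptil dtil)
    (htilOpt : ∀ p d : Fin I → ℝ, centralFeas I plo phi dlo dhi p d →
      totalCost I f u ptil dtil ≤ totalCost I f u p d)
    (hhatFeas : centralFeas I plo phi dlo dhi phat dhat)
    (hhatOpt : ∀ p d : Fin I → ℝ, centralFeas I plo phi dlo dhi p d →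
      totalCost I f u phat dhat + omegaReg I phat dhat / (2 * a * ((I : ℝ) - 1)) ≤
        totalCost I f u p d + omegaReg I p d / (2 * a * ((I : ℝ) - 1))) :
    totalCost I f u phat dhat ≤
      totalCost I f u ptil dtil + C1 * I / (a * ((I : ℝ) - 1)) := by

  have hI1 : (1:ℝ) ≤ (I:ℝ) - 1 := by
    have : (2:ℝ) ≤ I := by exact_mod_cast hI
    linarith
  have hden : 0 < a * ((I:ℝ) - 1) := mul_pos ha (by linarith)
  have hC1nn : 0 ≤ C1 := le_trans (sq_nonneg _) (hC1 ⟨0, by omega⟩).1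
  -- Ω(p̂,d̂) ≥ 0
  have hOmhat : 0 ≤ omegaReg I phat dhat :=
    Finset.sum_nonneg fun i _ => sq_nonneg _
  -- Ω(p̃,d̃) ≤ C1 * I
  have hOmtil : omegaReg I ptil dtil ≤ C1 * I := by
    have hbound : ∀ i : Fin I, (dtil i - ptil i) ^ 2 ≤ C1 := by
      intro i
      obtain ⟨h1, h2, h3, h4⟩ := htilFeas.2 i
      obtain ⟨hc1, hc2⟩ := hC1 i
      rcases le_total (dtil i - ptil i) 0 with h | h
      · have : (dtil i - ptil i)^2 ≤ (phi i - dlo i)^2 := by nlinarith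
        calc (dtil i - ptil i)^2 ≤ (phi i - dlo i)^2 := this
          _ = |phi i - dlo i|^2 := (sq_abs _).symm
          _ ≤ C1 := hc2
      · have : (dtil i - ptil i)^2 ≤ (plo i - dhi i)^2 := by nlinarith
        calc (dtil i - ptil i)^2 ≤ (plo i - dhi i)^2 := this
          _ = |plo i - dhi i|^2 := (sq_abs _).symm
          _ ≤ C1 := hc1
    calc omegaReg I ptil dtil ≤ ∑ _i : Fin I, C1 :=
          Finset.sum_le_sum fun i _ => hbound i
      _ = C1 * I := by simp [mul_comm]
  have key := hhatOpt ptil dtil htilFeas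
  have h2den : 0 < 2 * a * ((I:ℝ) - 1) := by nlinarith
  have hdiv : omegaReg I ptil dtil / (2 * a * ((I:ℝ) - 1)) ≤ C1 * I / (a * ((I:ℝ) - 1)) := by
    rw [div_le_div_iff₀ h2den hden]
    nlinarith [mul_nonneg hC1nn (by positivity : (0:ℝ) ≤ (I:ℝ))]
  have hhatdiv : 0 ≤ omegaReg I phat dhat / (2 * a * ((I:ℝ) - 1)) :=
    div_nonneg hOmhat (le_of_lt h2den)
  linarith
end

section
/- Let I ≥ 2, a > 0, and let S ⊆ ℝ^I × ℝ^I be the set of pairs (p, d) with Σ_{i=1}^I p_i = Σ_{i=1}^I d_i and p̲_i ≤ p_i ≤ p̄_i, d̲_i ≤ d_i ≤ d̄_i for all i, assumed nonempty. Define J(p, d) = Σ_{i=1}^I [f_i(p_i) − u_i(d_i)] and Ω(p, d) = Σ_{i=1}^I (d_i − p_i)². Let (p̃, d̃) minimize J over S and let (p̂, d̂) minimize J + Ω/(2a(I−1)) over S. Suppose C₁ ≥ max(|p̲_i − d̄_i|², |p̄_i − d̲_i|²) for all i, and suppose there exists C₂ < 0 with J(p̃, d̃) ≤ C₂·I. Then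 J(p̂, d̂)/J(p̃, d̃) ≥ 1 − C/(I−1), where C = C₁/(a·|C₂|). -/
open Finset

/-- Price-of-anarchy bound: `J(p̂,d̂)/J(p̃,d̃) ≥ 1 − C/(I−1)` with `C = C₁/(a·|C₂|)`. -/
theorem price_of_anarchy_bound
    (I : ℕ) (hI : 2 ≤ I) (a : ℝ) (ha : 0 < a)
    (f u : Fin I → ℝ → ℝ) (plo phi dlo dhi : Fin I → ℝ)
    (hfcont : ∀ i, Continuous (f i)) (hucont : ∀ i, Continuous (u i))
    (C1 C2 : ℝ)
    (hC1 : ∀ i, |plo i - dhi i| ^ 2 ≤ C1 ∧ |phi i - dlo i| ^ 2 ≤ C1)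
    (hC2 : C2 < 0)
    (ptil dtil phat dhat : Fin I → ℝ)
    (htilFeas : centralFeas I plo phi dlo dhi ptil dtil)
    (htilOpt : ∀ p d : Fin I → ℝ, centralFeas I plo phi dlo dhi p d →
      totalCost I f u ptil dtil ≤ totalCost I f u p d)
    (hhatFeas : centralFeas I plo phi dlo dhi phat dhat)
    (hhatOpt : ∀ p d : Fin I → ℝ, centralFeas I plo phi dlo dhi p d →
      totalCost I f u phat dhat + omegaReg I phat dhat / (2 * a * ((I : ℝ) - 1)) ≤
        totalCost I f u p d + omegaReg I p d / (2 * a * ((I : ℝ) - 1)))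
    (hneg : totalCost I f u ptil dtil ≤ C2 * I) :
    1 - (C1 / (a * |C2|)) / ((I : ℝ) - 1) ≤
      totalCost I f u phat dhat / totalCost I f u ptil dtil := by
  set Jt := totalCost I f u ptil dtil with hJt
  set Jh := totalCost I f u phat dhat with hJh
  have hIR : (2 : ℝ) ≤ (I : ℝ) := by exact_mod_cast hI
  have hn : (0 : ℝ) < (I : ℝ) - 1 := by linarith
  have hD : (0 : ℝ) < 2 * a * ((I : ℝ) - 1) := by positivity
  have hb : (0 : ℝ) < -C2 := by linarith
  -- C1 is nonnegative
  have hC1nn : 0 ≤ C1 := by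
    have := (hC1 ⟨0, by omega⟩).1
    have := sq_nonneg |plo ⟨0, by omega⟩ - dhi ⟨0, by omega⟩|
    nlinarith
  -- bound on omegaReg at the social optimum
  have hOmega : omegaReg I ptil dtil ≤ C1 * I := by
    have : omegaReg I ptil dtil ≤ ∑ _i : Fin I, C1 := by
      apply Finset.sum_le_sum
      intro i _
      obtain ⟨h1, h2, h3, h4⟩ := htilFeas.2 i
      obtain ⟨hc1, hc2⟩ := hC1 i
      rw [sq_abs] at hc1 hc2
      rcases le_or_gt 0 (dtil i - ptil i) with hx | hx
      · nlinarith
      · nlinarith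
    simpa [mul_comm] using this
  -- omegaReg is nonnegative
  have hOmegaHat : 0 ≤ omegaReg I phat dhat := by
    apply Finset.sum_nonneg; intro i _; positivity
  -- key inequality from the equilibrium optimality
  have hkey : Jh ≤ Jt + C1 * I / (2 * a * ((I : ℝ) - 1)) := by
    have h := hhatOpt ptil dtil htilFeas
    have h2 : omegaReg I ptil dtil / (2 * a * ((I : ℝ) - 1)) ≤
        C1 * I / (2 * a * ((I : ℝ) - 1)) := by
      exact div_le_div_of_nonneg_right hOmega hD.le
    have h3 : 0 ≤ omegaReg I phat dhat / (2 * a * ((I : ℝ) - 1)) :=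
      div_nonneg hOmegaHat hD.le
    simp only [← hJt, ← hJh] at h
    linarith
  have hJtneg : Jt < 0 := by
    have h0 : (0:ℝ) < I := by linarith
    nlinarith
  rw [abs_of_neg hC2, le_div_iff_of_neg hJtneg]
  set e : ℝ := C1 / (a * -C2) / ((I : ℝ) - 1) with he_def
  set q : ℝ := C1 * I / (2 * a * ((I : ℝ) - 1)) with hq_def
  have he0 : 0 ≤ e := by positivity
  have hq0 : 0 ≤ q := by positivity
  have he : e * (a * -C2 * ((I : ℝ) - 1)) = C1 := by
    rw [he_def, div_div, div_mul_cancel₀]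
    positivity
  have hq : q * (2 * a * ((I : ℝ) - 1)) = C1 * I := by
    rw [hq_def, div_mul_cancel₀]
    positivity
  have h2 : e * (-C2 * I) = 2 * q := by
    have hane : a * ((I : ℝ) - 1) ≠ 0 := by positivity
    apply mul_right_cancel₀ hane
    nlinarith [he, hq]
  have h1 : e * (-C2 * I) ≤ e * (-Jt) :=
    mul_le_mul_of_nonneg_left (by linarith) he0
  -- goal: Jh ≤ (1 - e) * Jt
  nlinarith [hkey, h1, h2]
end

section
/- Let I ≥ 2, a > 0, m > 0, and for each i ∈ {1,…,I} let f_i, u_i : ℝ → ℝ be twice differentiable with f_i'' ≥ m and −u_i'' ≥ m everywhere, with capacity bounds satisfying p̲ ≤ p̲_i ≤ p̄_i ≤ p̄ and d̲ ≤ d̲_i ≤ d̄_i ≤ d̄. Suppose λ̃ ∈ ℝ is a balancing price for the centralized problem: Σ_{i=1}^I [f̃_i(λ̃) − ũ_i(λ̃)] = 0, where f̃_i(λ) is the unique minimizer of p ↦ f_i(p) − λp on [p̲_i, p̄_i] and ũ_i(λ) is the unique minimizer of d ↦ λd − u_i(d) on [d̲_i, d̄_i]. Then there exists ζ̂ with λ̃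 + (p̲ − d̄)/(a(I−1)) ≤ ζ̂ ≤ λ̃ + (p̄ − d̲)/(a(I−1)) such that the unique minimizer (p̂_i, d̂_i)_{i=1}^I of Σ_i [f_i(p_i) − u_i(d_i) + (d_i − p_i)²/(2a(I−1)) + ζ̂·(d_i − p_i)] over the product of boxes [p̲_i, p̄_i] × [d̲_i, d̄_i] satisfies Σ_{i=1}^I p̂_i = Σ_{i=1}^I d̂_i. -/
open Finset

lemma aux_sc (f : ℝ → ℝ) (m : ℝ) (hf : ContDiff ℝ 2 f)
    (hf'' : ∀ x, m ≤ iteratedDeriv 2 f x) :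
    ∀ x y t : ℝ, 0 ≤ t → t ≤ 1 →
      f ((1-t)*x + t*y) ≤ (1-t)*f x + t*f y - m/2*(t*(1-t)*(x-y)^2) := by
  have hf2 : ContDiff ℝ ((1:ℕ∞)+1) f := by
    convert hf using 2; norm_num
  have hdf : Differentiable ℝ f := hf.differentiable (by norm_num)
  have hd1 : Differentiable ℝ (deriv f) :=
    ((contDiff_succ_iff_deriv.mp hf2).2.2).differentiable (by norm_num)
  set g : ℝ → ℝ := fun x => f x - m/2*x^2 with hg
  have hg' : deriv g = fun x => deriv f x - m*x := by
    funext x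
    have h1 : HasDerivAt (fun x : ℝ => m/2*x^2) (m/2*(2*x^(2-1))) x :=
      (hasDerivAt_pow 2 x).const_mul (m/2)
    have h2 : HasDerivAt g (deriv f x - m/2*(2*x^(2-1))) x :=
      ((hdf x).hasDerivAt).sub h1
    simpa using h2.deriv.trans (by ring_nf)
  have hcg : ConvexOn ℝ Set.univ g := by
    apply convexOn_of_deriv2_nonneg convex_univ
    · exact (hdf.sub ((differentiable_pow 2).const_mul (m/2))).continuous.continuousOn
    · exact (hdf.sub ((differentiable_pow 2).const_mul (m/2))).differentiableOn
    · rw [hg']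
      exact (hd1.sub ((differentiable_id).const_mul m)).differentiableOn
    · intro x _
      have : deriv^[2] g x = deriv (deriv g) x := by
        simp [Function.iterate_succ, Function.comp]
      rw [this, hg']
      have h3 : HasDerivAt (fun x => deriv f x - m*x) (deriv (deriv f) x - m*1) x :=
        ((hd1 x).hasDerivAt).sub ((hasDerivAt_id x).const_mul m)
      rw [h3.deriv]
      have h4 := hf'' x
      rw [iteratedDeriv_succ, iteratedDeriv_one] at h4
      linarith
  intro x y t ht0 ht1
  have := hcg.2 (Set.mem_univ x) (Set.mem_univ y) (by linarith : (0:ℝ) ≤ 1-t) ht0 (by ring)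
  simp only [smul_eq_mul, hg] at this
  nlinarith [this]

set_option maxHeartbeats 1000000 in
lemma aux_growth (F U : ℝ → ℝ) (m c ζ plo phi dlo dhi : ℝ) (hm : 0 < m) (hc : 0 < c)
    (hF : ∀ x y t : ℝ, 0 ≤ t → t ≤ 1 →
      F ((1-t)*x + t*y) ≤ (1-t)*F x + t*F y - m/2*(t*(1-t)*(x-y)^2))
    (hU : ∀ x y t : ℝ, 0 ≤ t → t ≤ 1 →
      U ((1-t)*x + t*y) ≤ (1-t)*U x + t*U y - m/2*(t*(1-t)*(x-y)^2))
    (p1 d1 p2 d2 : ℝ)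
    (h1p : p1 ∈ Set.Icc plo phi) (h1d : d1 ∈ Set.Icc dlo dhi)
    (h2p : p2 ∈ Set.Icc plo phi) (h2d : d2 ∈ Set.Icc dlo dhi)
    (hmin : ∀ p ∈ Set.Icc plo phi, ∀ d ∈ Set.Icc dlo dhi,
      F p1 + U d1 + (d1-p1)^2/(2*c) + ζ*(d1-p1) ≤ F p + U d + (d-p)^2/(2*c) + ζ*(d-p)) :
    F p1 + U d1 + (d1-p1)^2/(2*c) + ζ*(d1-p1) + m/2*((p2-p1)^2+(d2-d1)^2)
      ≤ F p2 + U d2 + (d2-p2)^2/(2*c) + ζ*(d2-p2) := by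
  have hK0 : (0:ℝ) ≤ (p2-p1)^2+(d2-d1)^2 := by positivity
  have key : ∀ t : ℝ, 0 < t → t ≤ 1 →
      F p1 + U d1 + (d1-p1)^2/(2*c) + ζ*(d1-p1) + m/2*((1-t)*((p2-p1)^2+(d2-d1)^2))
        ≤ F p2 + U d2 + (d2-p2)^2/(2*c) + ζ*(d2-p2) := by
    intro t ht0 ht1
    have htn : 0 ≤ t := ht0.le
    have ht1' : 0 ≤ 1 - t := by linarith
    have hptm : (1-t)*p1 + t*p2 ∈ Set.Icc plo phi := by
      constructor
      · nlinarith [h1p.1, h2p.1]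
      · nlinarith [h1p.2, h2p.2]
    have hdtm : (1-t)*d1 + t*d2 ∈ Set.Icc dlo dhi := by
      constructor
      · nlinarith [h1d.1, h2d.1]
      · nlinarith [h1d.2, h2d.2]
    have hmin' := hmin _ hptm _ hdtm
    have hFb := hF p1 p2 t htn ht1
    have hUb := hU d1 d2 t htn ht1
    have hsq : (((1-t)*d1 + t*d2) - ((1-t)*p1 + t*p2))^2
        ≤ (1-t)*(d1-p1)^2 + t*(d2-p2)^2 := by
      nlinarith [sq_nonneg ((d1-p1) - (d2-p2)), mul_nonneg htn ht1']
    have hqd : (((1-t)*d1 + t*d2) - ((1-t)*p1 + t*p2))^2/(2*c)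
        ≤ (1-t)*((d1-p1)^2/(2*c)) + t*((d2-p2)^2/(2*c)) := by
      have h2c : (0:ℝ) < 2*c := by linarith
      calc (((1-t)*d1 + t*d2) - ((1-t)*p1 + t*p2))^2/(2*c)
          ≤ ((1-t)*(d1-p1)^2 + t*(d2-p2)^2)/(2*c) := by
            exact div_le_div_of_nonneg_right hsq h2c.le
        _ = (1-t)*((d1-p1)^2/(2*c)) + t*((d2-p2)^2/(2*c)) := by ring
    have hlin : ζ*((((1-t)*d1 + t*d2)) - ((1-t)*p1 + t*p2))
        = (1-t)*(ζ*(d1-p1)) + t*(ζ*(d2-p2)) := by ring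
    have hcomb : F p1 + U d1 + (d1-p1)^2/(2*c) + ζ*(d1-p1)
        ≤ (1-t)*(F p1 + U d1 + (d1-p1)^2/(2*c) + ζ*(d1-p1))
          + t*(F p2 + U d2 + (d2-p2)^2/(2*c) + ζ*(d2-p2))
          - m/2*(t*(1-t)*((p2-p1)^2+(d2-d1)^2)) := by
      rw [hlin] at hmin'
      linarith [hmin', hFb, hUb, hqd]
    set A := F p1 + U d1 + (d1-p1)^2/(2*c) + ζ*(d1-p1) with hA
    set B := F p2 + U d2 + (d2-p2)^2/(2*c) + ζ*(d2-p2) with hB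
    set K := (p2-p1)^2+(d2-d1)^2 with hKK
    have h5 : t*(A + m/2*((1-t)*K)) ≤ t*B := by nlinarith [hcomb]
    exact le_of_mul_le_mul_left h5 ht0
  rcases eq_or_lt_of_le hK0 with hKz | hKp
  · have h1 := key 1 one_pos le_rfl
    nlinarith [h1, hKz]
  · by_contra hcon
    push_neg at hcon
    set A := F p1 + U d1 + (d1-p1)^2/(2*c) + ζ*(d1-p1) with hA
    set B := F p2 + U d2 + (d2-p2)^2/(2*c) + ζ*(d2-p2) with hB
    set K := (p2-p1)^2+(d2-d1)^2 with hKK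
    have hδ0 : 0 < A + m/2*K - B := by linarith
    set δ := A + m/2*K - B with hδ
    clear_value A B K δ
    obtain ⟨t, ht0, ht1, h8⟩ : ∃ t : ℝ, 0 < t ∧ t ≤ 1 ∧ t*(m*K) ≤ δ := by
      refine ⟨min 1 (δ/(m*K)), lt_min one_pos (div_pos hδ0 (mul_pos hm hKp)),
        min_le_left _ _, ?_⟩
      exact (le_div_iff₀ (mul_pos hm hKp)).mp (min_le_right _ _)
    have h6 := key t ht0 ht1
    linarith [h6, h8, hδ0, hδ]

lemma aux_qcomp (F U : ℝ → ℝ) (c lam ζ ptil dtil p1 d1 : ℝ) (hc : 0 < c)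
    (hFt : F ptil - lam * ptil ≤ F p1 - lam * p1)
    (hUt : U dtil + lam * dtil ≤ U d1 + lam * d1)
    (hmin : F p1 + U d1 + (d1-p1)^2/(2*c) + ζ*(d1-p1)
      ≤ F ptil + U dtil + (dtil-ptil)^2/(2*c) + ζ*(dtil-ptil)) :
    ((d1-p1) + c*(ζ-lam))^2 ≤ ((dtil-ptil) + c*(ζ-lam))^2 := by
  have hq : (d1-p1)^2/(2*c) + (ζ-lam)*(d1-p1)
      ≤ (dtil-ptil)^2/(2*c) + (ζ-lam)*(dtil-ptil) := by linarith
  have h2c : (0:ℝ) < 2*c := by linarith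
  have h2 := mul_le_mul_of_nonneg_right hq h2c.le
  have e1 : ((d1-p1)^2/(2*c) + (ζ-lam)*(d1-p1))*(2*c)
      = (d1-p1)^2 + 2*c*(ζ-lam)*(d1-p1) := by field_simp
  have e2 : ((dtil-ptil)^2/(2*c) + (ζ-lam)*(dtil-ptil))*(2*c)
      = (dtil-ptil)^2 + 2*c*(ζ-lam)*(dtil-ptil) := by field_simp
  rw [e1, e2] at h2
  nlinarith [h2]

lemma aux_exists (F U : ℝ → ℝ) (hF : Continuous F) (hU : Continuous U)
    (c ζ plo phi dlo dhi : ℝ) (hpd : plo ≤ phi) (hdd : dlo ≤ dhi) :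
    ∃ p d : ℝ, p ∈ Set.Icc plo phi ∧ d ∈ Set.Icc dlo dhi ∧
      ∀ x ∈ Set.Icc plo phi, ∀ y ∈ Set.Icc dlo dhi,
        F p + U d + (d-p)^2/(2*c) + ζ*(d-p) ≤ F x + U y + (y-x)^2/(2*c) + ζ*(y-x) := by
  have hcompact : IsCompact (Set.Icc plo phi ×ˢ Set.Icc dlo dhi) :=
    isCompact_Icc.prod isCompact_Icc
  have hne : (Set.Icc plo phi ×ˢ Set.Icc dlo dhi).Nonempty :=
    (Set.nonempty_Icc.mpr hpd).prod (Set.nonempty_Icc.mpr hdd)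
  have hcont : Continuous (fun z : ℝ × ℝ =>
      F z.1 + U z.2 + (z.2 - z.1)^2/(2*c) + ζ*(z.2 - z.1)) := by
    apply Continuous.add
    apply Continuous.add
    apply Continuous.add
    · exact hF.comp continuous_fst
    · exact hU.comp continuous_snd
    · exact ((continuous_snd.sub continuous_fst).pow 2).div_const (2*c)
    · exact continuous_const.mul (continuous_snd.sub continuous_fst)
  obtain ⟨z, hz, hzmin⟩ := hcompact.exists_isMinOn hne hcont.continuousOn
  refine ⟨z.1, z.2, (Set.mem_prod.mp hz).1, (Set.mem_prod.mp hz).2, ?_⟩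
  intro x hx y hy
  exact hzmin (Set.mem_prod.mpr (⟨hx, hy⟩ : x ∈ _ ∧ y ∈ _) : (x,y) ∈ _)

set_option maxHeartbeats 2000000 in
/-- If `λ̃` is a balancing price of the centralized problem, then the regularized
(energy sharing) problem has a balancing dual price `ζ̂` within
`max(p̄ − d̲, p̲ − d̄)-type` distance `O(1/(I−1))` of `λ̃`. -/
theorem regularized_dual_price_exists_near_central
    (I : ℕ) (hI : 2 ≤ I) (a m : ℝ) (ha : 0 < a) (hm : 0 < m)
    (f u : Fin I → ℝ → ℝ)
    (hf : ∀ i, ContDiff ℝ 2 (f i)) (hu : ∀ i, ContDiff ℝ 2 (u i))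
    (hf'' : ∀ i, ∀ x : ℝ, m ≤ iteratedDeriv 2 (f i) x)
    (hu'' : ∀ i, ∀ x : ℝ, iteratedDeriv 2 (u i) x ≤ -m)
    (plo phi dlo dhi : Fin I → ℝ) (plo0 phi0 dlo0 dhi0 : ℝ)
    (hp : ∀ i, plo0 ≤ plo i ∧ plo i ≤ phi i ∧ phi i ≤ phi0)
    (hd : ∀ i, dlo0 ≤ dlo i ∧ dlo i ≤ dhi i ∧ dhi i ≤ dhi0)
    (lamTil : ℝ) (ptil dtil : Fin I → ℝ)
    -- `ptil i = f̃_i(λ̃)` : the unique minimizer of `p ↦ f_i(p) − λ̃ p` on `[p̲_i, p̄_i]`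
    (hptil : ∀ i, ptil i ∈ Set.Icc (plo i) (phi i) ∧
      ∀ x ∈ Set.Icc (plo i) (phi i),
        f i (ptil i) - lamTil * ptil i ≤ f i x - lamTil * x)
    -- `dtil i = ũ_i(λ̃)` : the unique minimizer of `d ↦ λ̃ d − u_i(d)` on `[d̲_i, d̄_i]`
    (hdtil : ∀ i, dtil i ∈ Set.Icc (dlo i) (dhi i) ∧
      ∀ x ∈ Set.Icc (dlo i) (dhi i),
        lamTil * dtil i - u i (dtil i) ≤ lamTil * x - u i x)
    -- `λ̃` is a balancing price: `Σ_i (f̃_i(λ̃) − ũ_i(λ̃)) = 0`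
    (hbal : ∑ i, (ptil i - dtil i) = 0) :
    ∃ zeta : ℝ,
      lamTil + (plo0 - dhi0) / (a * ((I : ℝ) - 1)) ≤ zeta ∧
      zeta ≤ lamTil + (phi0 - dlo0) / (a * ((I : ℝ) - 1)) ∧
      ∀ phat dhat : Fin I → ℝ,
        ((∀ i, phat i ∈ Set.Icc (plo i) (phi i) ∧ dhat i ∈ Set.Icc (dlo i) (dhi i)) ∧
          ∀ p d : Fin I → ℝ,
            (∀ i, p i ∈ Set.Icc (plo i) (phi i) ∧ d i ∈ Set.Icc (dlo i) (dhi i)) →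
            (∑ i, (f i (phat i) - u i (dhat i) +
                (dhat i - phat i) ^ 2 / (2 * a * ((I : ℝ) - 1)) +
                zeta * (dhat i - phat i))) ≤
              (∑ i, (f i (p i) - u i (d i) +
                (d i - p i) ^ 2 / (2 * a * ((I : ℝ) - 1)) +
                zeta * (d i - p i)))) →
        ∑ i, phat i = ∑ i, dhat i := by
  have hI2 : (2:ℝ) ≤ (I:ℝ) := by exact_mod_cast hI
  set c := a * ((I:ℝ)-1) with hcdef
  have hc : 0 < c := mul_pos ha (by linarith)
  -- strong convexity of f i and of -(u i)
  have hFsc : ∀ i, ∀ x y t : ℝ, 0 ≤ t → t ≤ 1 →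
      f i ((1-t)*x + t*y) ≤ (1-t)*f i x + t*f i y - m/2*(t*(1-t)*(x-y)^2) :=
    fun i => aux_sc (f i) m (hf i) (hf'' i)
  have hUsc : ∀ i, ∀ x y t : ℝ, 0 ≤ t → t ≤ 1 →
      -(u i ((1-t)*x + t*y)) ≤ (1-t)*(-(u i x)) + t*(-(u i y)) - m/2*(t*(1-t)*(x-y)^2) := by
    intro i
    exact aux_sc (fun x => -(u i x)) m ((hu i).neg)
      (fun x => by rw [iteratedDeriv_fun_neg]; linarith [hu'' i x])
  -- minimizers of the regularized per-agent problems
  have hex : ∀ ζ : ℝ, ∀ i : Fin I, ∃ p d : ℝ,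
      p ∈ Set.Icc (plo i) (phi i) ∧ d ∈ Set.Icc (dlo i) (dhi i) ∧
      ∀ x ∈ Set.Icc (plo i) (phi i), ∀ y ∈ Set.Icc (dlo i) (dhi i),
        f i p + -(u i d) + (d-p)^2/(2*c) + ζ*(d-p)
          ≤ f i x + -(u i y) + (y-x)^2/(2*c) + ζ*(y-x) := by
    intro ζ i
    exact aux_exists (f i) (fun x => -(u i x)) (hf i).continuous ((hu i).continuous.neg)
      c ζ _ _ _ _ ((hp i).2.1) ((hd i).2.1)
  choose P D hPmem hDmem hPDmin using hex
  -- growth bound at the minimizer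
  have hgrow : ∀ ζ : ℝ, ∀ i, ∀ p2 d2 : ℝ, p2 ∈ Set.Icc (plo i) (phi i) →
      d2 ∈ Set.Icc (dlo i) (dhi i) →
      f i (P ζ i) + -(u i (D ζ i)) + (D ζ i - P ζ i)^2/(2*c) + ζ*(D ζ i - P ζ i)
          + m/2*((p2 - P ζ i)^2 + (d2 - D ζ i)^2)
        ≤ f i p2 + -(u i d2) + (d2-p2)^2/(2*c) + ζ*(d2-p2) :=
    fun ζ i p2 d2 h2 h2' =>
      aux_growth (f i) (fun x => -(u i x)) m c ζ _ _ _ _ hm hc (hFsc i) (hUsc i)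
        _ _ _ _ (hPmem ζ i) (hDmem ζ i) h2 h2' (hPDmin ζ i)
  -- Lipschitz bound on the per-agent excess
  have hlipi : ∀ ζ1 ζ2 : ℝ, ∀ i,
      |(D ζ1 i - P ζ1 i) - (D ζ2 i - P ζ2 i)| ≤ 2/m * |ζ1 - ζ2| := by
    intro ζ1 ζ2 i
    have h1 := hgrow ζ1 i (P ζ2 i) (D ζ2 i) (hPmem ζ2 i) (hDmem ζ2 i)
    have h2 := hgrow ζ2 i (P ζ1 i) (D ζ1 i) (hPmem ζ1 i) (hDmem ζ1 i)
    have hkey : m*((D ζ2 i - P ζ2 i) - (D ζ1 i - P ζ1 i))^2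
        ≤ 2*(ζ1-ζ2)*((D ζ2 i - P ζ2 i) - (D ζ1 i - P ζ1 i)) := by
      nlinarith [h1, h2, mul_nonneg hm.le (sq_nonneg ((D ζ2 i - D ζ1 i) + (P ζ2 i - P ζ1 i)))]
    rw [div_mul_eq_mul_div, le_div_iff₀ hm]
    rcases le_total (D ζ1 i - P ζ1 i) (D ζ2 i - P ζ2 i) with h | h
    · rw [abs_sub_comm, abs_of_nonneg (by linarith)]
      have h3 : (ζ1-ζ2)*((D ζ2 i - P ζ2 i) - (D ζ1 i - P ζ1 i))
          ≤ |ζ1 - ζ2| * ((D ζ2 i - P ζ2 i) - (D ζ1 i - P ζ1 i)) :=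
        mul_le_mul_of_nonneg_right (le_abs_self _) (by linarith)
      nlinarith [hkey, h3, abs_nonneg (ζ1-ζ2), hm]
    · rw [abs_of_nonneg (by linarith)]
      have h3 : (ζ1-ζ2)*((D ζ2 i - P ζ2 i) - (D ζ1 i - P ζ1 i))
          ≤ |ζ1 - ζ2| * ((D ζ1 i - P ζ1 i) - (D ζ2 i - P ζ2 i)) := by
        have := neg_abs_le (ζ1-ζ2)
        nlinarith [abs_nonneg (ζ1-ζ2)]
      nlinarith [hkey, h3, abs_nonneg (ζ1-ζ2), hm]
  -- the excess function and its continuity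
  set E : ℝ → ℝ := fun ζ => ∑ i, (D ζ i - P ζ i) with hE
  have hElip : ∀ ζ1 ζ2 : ℝ, |E ζ1 - E ζ2| ≤ ((I:ℝ) * (2/m)) * |ζ1 - ζ2| := by
    intro ζ1 ζ2
    have h0 : E ζ1 - E ζ2 = ∑ i, ((D ζ1 i - P ζ1 i) - (D ζ2 i - P ζ2 i)) := by
      simp only [hE]
      rw [← Finset.sum_sub_distrib]
    rw [h0]
    calc |∑ i, ((D ζ1 i - P ζ1 i) - (D ζ2 i - P ζ2 i))|
        ≤ ∑ i, |(D ζ1 i - P ζ1 i) - (D ζ2 i - P ζ2 i)| := Finset.abs_sum_le_sum_abs _ _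
      _ ≤ ∑ _i : Fin I, 2/m * |ζ1 - ζ2| := Finset.sum_le_sum (fun i _ => hlipi ζ1 ζ2 i)
      _ = (I:ℝ) * (2/m * |ζ1 - ζ2|) := by
          rw [Finset.sum_const, Finset.card_univ, Fintype.card_fin, nsmul_eq_mul]
      _ = ((I:ℝ) * (2/m)) * |ζ1 - ζ2| := by ring
  have hEcont : Continuous E := by
    have hK0 : 0 ≤ ((I:ℝ) * (2/m)) := by positivity
    exact (LipschitzWith.of_dist_le_mul (K := ⟨_, hK0⟩) (fun x y => by
      rw [Real.dist_eq, Real.dist_eq]; exact hElip x y)).continuous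
  -- endpoint signs
  have hsumtil : ∑ i, (dtil i - ptil i) = 0 := by
    rw [Finset.sum_sub_distrib] at hbal ⊢; linarith
  have hip : ∀ i, D (lamTil + (phi0 - dlo0)/c) i - P (lamTil + (phi0 - dlo0)/c) i
      ≤ dtil i - ptil i := by
    intro i
    have hUt : -(u i (dtil i)) + lamTil * dtil i
        ≤ -(u i (D (lamTil + (phi0 - dlo0)/c) i)) + lamTil * D (lamTil + (phi0 - dlo0)/c) i := by
      have := (hdtil i).2 _ (hDmem (lamTil + (phi0 - dlo0)/c) i)
      linarith
    have hq := aux_qcomp (f i) (fun x => -(u i x)) c lamTil (lamTil + (phi0 - dlo0)/c)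
      (ptil i) (dtil i) (P (lamTil + (phi0 - dlo0)/c) i) (D (lamTil + (phi0 - dlo0)/c) i) hc
      ((hptil i).2 _ (hPmem (lamTil + (phi0 - dlo0)/c) i)) hUt
      (hPDmin (lamTil + (phi0 - dlo0)/c) i _ (hptil i).1 _ (hdtil i).1)
    have hcm : c * (lamTil + (phi0 - dlo0)/c - lamTil) = phi0 - dlo0 := by
      field_simp
      ring
    rw [hcm] at hq
    have hb1 : dlo0 - phi0 ≤ D (lamTil + (phi0 - dlo0)/c) i - P (lamTil + (phi0 - dlo0)/c) i := by
      have := (hPmem (lamTil + (phi0 - dlo0)/c) i).2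
      have := (hDmem (lamTil + (phi0 - dlo0)/c) i).1
      linarith [(hp i).2.2, (hd i).1]
    have hb2 : dlo0 - phi0 ≤ dtil i - ptil i := by
      have := (hptil i).1.2
      have := (hdtil i).1.1
      linarith [(hp i).2.2, (hd i).1]
    nlinarith [hq, hb1, hb2]
  have him : ∀ i, dtil i - ptil i
      ≤ D (lamTil + (plo0 - dhi0)/c) i - P (lamTil + (plo0 - dhi0)/c) i := by
    intro i
    have hUt : -(u i (dtil i)) + lamTil * dtil i
        ≤ -(u i (D (lamTil + (plo0 - dhi0)/c) i)) + lamTil * D (lamTil + (plo0 - dhi0)/c) i := by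
      have := (hdtil i).2 _ (hDmem (lamTil + (plo0 - dhi0)/c) i)
      linarith
    have hq := aux_qcomp (f i) (fun x => -(u i x)) c lamTil (lamTil + (plo0 - dhi0)/c)
      (ptil i) (dtil i) (P (lamTil + (plo0 - dhi0)/c) i) (D (lamTil + (plo0 - dhi0)/c) i) hc
      ((hptil i).2 _ (hPmem (lamTil + (plo0 - dhi0)/c) i)) hUt
      (hPDmin (lamTil + (plo0 - dhi0)/c) i _ (hptil i).1 _ (hdtil i).1)
    have hcm : c * (lamTil + (plo0 - dhi0)/c - lamTil) = plo0 - dhi0 := by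
      field_simp
      ring
    rw [hcm] at hq
    have hb1 : D (lamTil + (plo0 - dhi0)/c) i - P (lamTil + (plo0 - dhi0)/c) i ≤ dhi0 - plo0 := by
      have := (hPmem (lamTil + (plo0 - dhi0)/c) i).1
      have := (hDmem (lamTil + (plo0 - dhi0)/c) i).2
      linarith [(hp i).1, (hd i).2.2]
    have hb2 : dtil i - ptil i ≤ dhi0 - plo0 := by
      have := (hptil i).1.1
      have := (hdtil i).1.2
      linarith [(hp i).1, (hd i).2.2]
    nlinarith [hq, hb1, hb2]
  have hEplus : E (lamTil + (phi0 - dlo0)/c) ≤ 0 := by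
    calc E (lamTil + (phi0 - dlo0)/c) ≤ ∑ i, (dtil i - ptil i) :=
          Finset.sum_le_sum (fun i _ => hip i)
      _ = 0 := hsumtil
  have hEminus : 0 ≤ E (lamTil + (plo0 - dhi0)/c) := by
    calc (0:ℝ) = ∑ i, (dtil i - ptil i) := hsumtil.symm
      _ ≤ E (lamTil + (plo0 - dhi0)/c) := Finset.sum_le_sum (fun i _ => him i)
  -- the endpoints are ordered
  have hle : lamTil + (plo0 - dhi0)/c ≤ lamTil + (phi0 - dlo0)/c := by
    have i0 : Fin I := ⟨0, by omega⟩
    have h1 : plo0 ≤ phi0 := le_trans (hp i0).1 (le_trans (hp i0).2.1 (hp i0).2.2)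
    have h2 : dlo0 ≤ dhi0 := le_trans (hd i0).1 (le_trans (hd i0).2.1 (hd i0).2.2)
    have h3 : (plo0 - dhi0)/c ≤ (phi0 - dlo0)/c := by
      apply div_le_div_of_nonneg_right (by linarith) hc.le
    linarith
  -- intermediate value theorem
  obtain ⟨zeta, hzmem, hz0⟩ :=
    intermediate_value_Icc' hle hEcont.continuousOn (Set.mem_Icc.mpr ⟨hEplus, hEminus⟩)
  refine ⟨zeta, hzmem.1, hzmem.2, ?_⟩
  rintro phat dhat ⟨hfeas, hminjoint⟩
  have hform : ∀ (p d : Fin I → ℝ),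
      (∑ i, (f i (p i) - u i (d i) + (d i - p i) ^ 2 / (2 * a * ((I : ℝ) - 1)) +
        zeta * (d i - p i)))
      = ∑ i, (f i (p i) + -(u i (d i)) + (d i - p i)^2/(2*c) + zeta*(d i - p i)) := by
    intro p d
    apply Finset.sum_congr rfl
    intro i _
    rw [hcdef]
    ring
  have h1 : ∑ i, (f i (phat i) + -(u i (dhat i)) + (dhat i - phat i)^2/(2*c)
        + zeta*(dhat i - phat i))
      ≤ ∑ i, (f i (P zeta i) + -(u i (D zeta i)) + (D zeta i - P zeta i)^2/(2*c)
        + zeta*(D zeta i - P zeta i)) := by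
    have := hminjoint (P zeta) (D zeta) (fun i => ⟨hPmem zeta i, hDmem zeta i⟩)
    rw [hform phat dhat, hform (P zeta) (D zeta)] at this
    exact this
  have h2 : ∀ i ∈ Finset.univ,
      f i (P zeta i) + -(u i (D zeta i)) + (D zeta i - P zeta i)^2/(2*c)
        + zeta*(D zeta i - P zeta i)
      ≤ f i (phat i) + -(u i (dhat i)) + (dhat i - phat i)^2/(2*c)
        + zeta*(dhat i - phat i) :=
    fun i _ => hPDmin zeta i _ (hfeas i).1 _ (hfeas i).2
  have h3 := (Finset.sum_eq_sum_iff_of_le h2).mp (le_antisymm (Finset.sum_le_sum h2) h1)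
  have h5 : ∀ i, phat i = P zeta i ∧ dhat i = D zeta i := by
    intro i
    have hg := hgrow zeta i (phat i) (dhat i) (hfeas i).1 (hfeas i).2
    have heq := h3 i (Finset.mem_univ i)
    have hsp : (phat i - P zeta i)^2 = 0 :=
      le_antisymm (by nlinarith [sq_nonneg (dhat i - D zeta i)]) (sq_nonneg _)
    have hsd : (dhat i - D zeta i)^2 = 0 :=
      le_antisymm (by nlinarith [sq_nonneg (phat i - P zeta i)]) (sq_nonneg _)
    constructor
    · have := pow_eq_zero_iff (n := 2) (by norm_num) |>.mp hsp
      linarith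
    · have := pow_eq_zero_iff (n := 2) (by norm_num) |>.mp hsd
      linarith
  have hE0 : ∑ i, P zeta i = ∑ i, D zeta i := by
    have h := hz0
    simp only [hE] at h
    rw [Finset.sum_sub_distrib] at h
    linarith
  calc ∑ i, phat i = ∑ i, P zeta i := Finset.sum_congr rfl (fun i _ => (h5 i).1)
    _ = ∑ i, D zeta i := hE0
    _ = ∑ i, dhat i := (Finset.sum_congr rfl (fun i _ => (h5 i).2)).symm
end

section
/- Let I ≥ 2, a > 0, m > 0, and for each i ∈ {1,…,I} let f_i, u_i : ℝ → ℝ be twice differentiable with f_i'' ≥ m and −u_i'' ≥ m everywhere, with capacity bounds satisfying p̲ ≤ p̲_i ≤ p̄_i ≤ p̄ and d̲ ≤ d̲_i ≤ d̄_i ≤ d̄. Let λ̃ ∈ ℝ and for each i let p̃_i be the unique minimizer of p ↦ f_i(p) − λ̃p on [p̲_i, p̄_i] and d̃_i the unique minimizer of d ↦ λ̃d − u_i(d) on [d̲_i, d̄_i]. Let ζ̂ ∈ ℝ with |ζ̂ − λ̃| ≤ σ/(I−1), where σ := max(|p̄ − d̲|, |p̲ − d̄|)/a, and let (p̂_i,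 d̂_i) be the unique minimizer of (p, d) ↦ f_i(p) − u_i(d) + (d − p)²/(2a(I−1)) + ζ̂·(d − p) over [p̲_i, p̄_i] × [d̲_i, d̄_i]. Then for every i, |p̂_i − p̃_i| ≤ 2σ/(m(I−1)) and |d̂_i − d̃_i| ≤ 2σ/(m(I−1)). -/
open Set

lemma conv_aux (φ : ℝ → ℝ) (hφ : ContDiff ℝ 2 φ) (m κ b c : ℝ) (hκ : 0 ≤ κ)
    (h2 : ∀ x, m ≤ iteratedDeriv 2 φ x) :
    ConvexOn ℝ Set.univ (fun x => φ x + κ * x ^ 2 + b * x + c - m / 2 * x ^ 2) := by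
  have hφd : Differentiable ℝ φ := hφ.differentiable (by norm_num)
  have hφ' : ContDiff ℝ 1 (deriv φ) := by
    have h := (contDiff_succ_iff_deriv (n := 1)).mp (by exact_mod_cast hφ)
    exact h.2.2
  have hφ'd : Differentiable ℝ (deriv φ) := hφ'.differentiable (by norm_num)
  have hit2 : iteratedDeriv 2 φ = deriv (deriv φ) := by
    rw [iteratedDeriv_succ, iteratedDeriv_one]
  set G : ℝ → ℝ := fun y => φ y + (κ * y ^ 2 + (b * y + c) - m / 2 * y ^ 2) with hG
  have hFG : (fun x => φ x + κ * x ^ 2 + b * x + c - m / 2 * x ^ 2) = G := by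
    funext y; simp only [hG]; ring
  rw [hFG]
  have hsq : ∀ x : ℝ, HasDerivAt (fun y : ℝ => y ^ 2) (2 * x) x := by
    intro x; simpa using hasDerivAt_pow 2 x
  have hb : ∀ x : ℝ, HasDerivAt (fun y : ℝ => b * y) b x := by
    intro x; simpa using (hasDerivAt_id x).const_mul b
  have hG' : ∀ x : ℝ, HasDerivAt G
      (deriv φ x + (κ * (2 * x) + b - m / 2 * (2 * x))) x := by
    intro x
    exact (hφd x).hasDerivAt.add ((((hsq x).const_mul κ).add
      ((hb x).add_const c)).sub ((hsq x).const_mul (m / 2)))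
  have hGd : Differentiable ℝ G := fun x => (hG' x).differentiableAt
  have hderiv : deriv G = fun x => deriv φ x + ((2 * κ - m) * x + b) := by
    funext x; rw [(hG' x).deriv]; ring
  have hG'' : ∀ x : ℝ, HasDerivAt (fun x => deriv φ x + ((2 * κ - m) * x + b))
      (deriv (deriv φ) x + (2 * κ - m)) x := by
    intro x
    exact (hφ'd x).hasDerivAt.add
      (by simpa using ((hasDerivAt_id x).const_mul (2 * κ - m)).add_const b)
  have hG'd : Differentiable ℝ (deriv G) := by
    rw [hderiv]; exact fun x => (hG'' x).differentiableAt
  apply convexOn_of_deriv2_nonneg convex_univ hGd.continuous.continuousOn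
    hGd.differentiableOn (by rw [interior_univ]; exact hG'd.differentiableOn)
  intro x _
  have key : deriv (deriv G) x = iteratedDeriv 2 φ x + (2 * κ - m) := by
    rw [hderiv, (hG'' x).deriv, hit2]
  simp only [Function.iterate_succ_apply', Function.iterate_zero_apply]
  rw [key]
  have := h2 x
  linarith

lemma strong_min (m : ℝ) (φ : ℝ → ℝ)
    (hconv : ConvexOn ℝ Set.univ (fun x => φ x - m / 2 * x ^ 2))
    (lo hi xs xh : ℝ) (hxs : xs ∈ Set.Icc lo hi) (hxh : xh ∈ Set.Icc lo hi)
    (hmin : ∀ x ∈ Set.Icc lo hi, φ xs ≤ φ x) :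
    m / 2 * (xh - xs) ^ 2 ≤ φ xh - φ xs := by
  have key : ∀ t : ℝ, t ∈ Set.Ioc (0:ℝ) 1 → m / 2 * (1 - t) * (xh - xs) ^ 2 ≤ φ xh - φ xs := by
    intro t ht
    have ht0 : 0 < t := ht.1
    have ht1 : t ≤ 1 := ht.2
    have hmem : t • xh + (1 - t) • xs ∈ Set.Icc lo hi :=
      (convex_Icc lo hi) hxh hxs (le_of_lt ht0) (by linarith) (by ring)
    have hc := hconv.2 (Set.mem_univ xh) (Set.mem_univ xs) (le_of_lt ht0)
      (by linarith : (0:ℝ) ≤ 1 - t) (by ring)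
    simp only [smul_eq_mul] at hc hmem
    have hmle := hmin _ hmem
    nlinarith [sq_nonneg (xh - xs), mul_pos ht0 ht0]
  have hten : Filter.Tendsto (fun t : ℝ => m / 2 * (1 - t) * (xh - xs) ^ 2)
      (nhdsWithin 0 (Set.Ioi 0)) (nhds (m / 2 * (xh - xs) ^ 2)) := by
    have hc : Continuous (fun t : ℝ => m / 2 * (1 - t) * (xh - xs) ^ 2) := by continuity
    have h0 := hc.tendsto 0
    rw [show m / 2 * (1 - (0:ℝ)) * (xh - xs) ^ 2 = m / 2 * (xh - xs) ^ 2 by ring] at h0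
    exact h0.mono_left nhdsWithin_le_nhds
  refine le_of_tendsto hten ?_
  filter_upwards [Ioc_mem_nhdsGT_of_mem (by norm_num : (0:ℝ) ∈ Set.Ico (0:ℝ) 1)] with t ht
  exact key t ht

lemma abs_le_div_aux (m L x : ℝ) (hm : 0 < m) (hL : 0 ≤ L) (h : m * x ^ 2 ≤ L * |x|) :
    |x| ≤ L / m := by
  rcases eq_or_lt_of_le (abs_nonneg x) with h0 | h0
  · rw [← h0]; positivity
  · have h1 : m * |x| * |x| ≤ L * |x| := by nlinarith [abs_mul_abs_self x]
    have h2 : m * |x| ≤ L := le_of_mul_le_mul_right h1 h0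
    rw [le_div_iff₀ hm]; linarith



open Finset

/-- Individual strategies at the energy sharing equilibrium are within
`2σ/(m(I−1))` of the centralized socially optimal strategies. -/
theorem sharing_strategies_close_to_central
    (I : ℕ) (hI : 2 ≤ I) (a m : ℝ) (ha : 0 < a) (hm : 0 < m)
    (f u : Fin I → ℝ → ℝ)
    (hf : ∀ i, ContDiff ℝ 2 (f i)) (hu : ∀ i, ContDiff ℝ 2 (u i))
    (hf'' : ∀ i, ∀ x : ℝ, m ≤ iteratedDeriv 2 (f i) x)
    (hu'' : ∀ i, ∀ x : ℝ, iteratedDeriv 2 (u i) x ≤ -m)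
    (plo phi dlo dhi : Fin I → ℝ) (plo0 phi0 dlo0 dhi0 : ℝ)
    (hp : ∀ i, plo0 ≤ plo i ∧ plo i ≤ phi i ∧ phi i ≤ phi0)
    (hd : ∀ i, dlo0 ≤ dlo i ∧ dlo i ≤ dhi i ∧ dhi i ≤ dhi0)
    (lamTil zeta : ℝ) (ptil dtil phat dhat : Fin I → ℝ)
    -- `ptil i` minimizes `p ↦ f_i(p) − λ̃ p` on `[p̲_i, p̄_i]`
    (hptil : ∀ i, ptil i ∈ Set.Icc (plo i) (phi i) ∧
      ∀ x ∈ Set.Icc (plo i) (phi i),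
        f i (ptil i) - lamTil * ptil i ≤ f i x - lamTil * x)
    -- `dtil i` minimizes `d ↦ λ̃ d − u_i(d)` on `[d̲_i, d̄_i]`
    (hdtil : ∀ i, dtil i ∈ Set.Icc (dlo i) (dhi i) ∧
      ∀ x ∈ Set.Icc (dlo i) (dhi i),
        lamTil * dtil i - u i (dtil i) ≤ lamTil * x - u i x)
    -- `ζ̂` is close to `λ̃`
    (hzeta : |zeta - lamTil| ≤ (max |phi0 - dlo0| |plo0 - dhi0| / a) / ((I : ℝ) - 1))
    -- `(phat i, dhat i)` minimizes the regularized objective over the box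
    (hhat : ∀ i, (phat i ∈ Set.Icc (plo i) (phi i) ∧ dhat i ∈ Set.Icc (dlo i) (dhi i)) ∧
      ∀ x ∈ Set.Icc (plo i) (phi i), ∀ y ∈ Set.Icc (dlo i) (dhi i),
        f i (phat i) - u i (dhat i) +
            (dhat i - phat i) ^ 2 / (2 * a * ((I : ℝ) - 1)) +
            zeta * (dhat i - phat i) ≤
          f i x - u i y + (y - x) ^ 2 / (2 * a * ((I : ℝ) - 1)) + zeta * (y - x)) :
    ∀ i : Fin I,
      |phat i - ptil i| ≤
        2 * (max |phi0 - dlo0| |plo0 - dhi0| / a) / (m * ((I : ℝ) - 1)) ∧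
      |dhat i - dtil i| ≤
        2 * (max |phi0 - dlo0| |plo0 - dhi0| / a) / (m * ((I : ℝ) - 1)) := by

  set sa := max |phi0 - dlo0| |plo0 - dhi0| with hsadef
  set n := (I : ℝ) - 1 with hndef
  have hI2 : (2:ℝ) ≤ (I:ℝ) := by exact_mod_cast hI
  have hn0 : 0 < n := by rw [hndef]; linarith
  have h2an : 0 < 2 * a * n := by positivity
  have hk : (0:ℝ) ≤ 1 / (2 * a * n) := by positivity
  have hsa0 : 0 ≤ sa := le_trans (abs_nonneg _) (le_max_left _ _)
  have hL0 : 0 ≤ 2 * (sa / a / n) := by positivity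
  intro i
  obtain ⟨⟨hphat, hdhat⟩, hmin2⟩ := hhat i
  obtain ⟨hpt, hptmin⟩ := hptil i
  obtain ⟨hdt, hdtmin⟩ := hdtil i
  obtain ⟨hp1, hp2, hp3⟩ := hp i
  obtain ⟨hd1, hd2, hd3⟩ := hd i
  have hsig : ∀ x ∈ Set.Icc (plo i) (phi i), ∀ y ∈ Set.Icc (dlo i) (dhi i), |y - x| ≤ sa := by
    intro x hx y hy
    obtain ⟨hx1, hx2⟩ := hx
    obtain ⟨hy1, hy2⟩ := hy
    rw [abs_sub_le_iff]
    constructor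
    · have h1 : y - x ≤ dhi0 - plo0 := by linarith
      have h2 : dhi0 - plo0 ≤ |plo0 - dhi0| := by
        rw [abs_sub_comm]; exact le_abs_self _
      exact le_trans h1 (le_trans h2 (le_max_right _ _))
    · have h1 : x - y ≤ phi0 - dlo0 := by linarith
      exact le_trans h1 (le_trans (le_abs_self _) (le_max_left _ _))
  have hzeta' : |zeta - lamTil| ≤ sa / a / n := hzeta
  have hnu : ContDiff ℝ 2 (fun x => -(u i x)) := (hu i).neg
  have hnu'' : ∀ x : ℝ, m ≤ iteratedDeriv 2 (fun x => -(u i x)) x := by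
    intro x
    show m ≤ iteratedDeriv 2 (-(u i)) x
    rw [iteratedDeriv_neg]
    have := hu'' i x
    linarith
  have heqfin : 2 * (sa / a / n) / m = 2 * (sa / a) / (m * n) := by
    field_simp
  constructor
  · -- p side
    have hgconv : ConvexOn ℝ Set.univ (fun x => (f i x - lamTil * x) - m / 2 * x ^ 2) := by
      have h := conv_aux (f i) (hf i) m 0 (-lamTil) 0 le_rfl (hf'' i)
      have e : (fun x => (f i x - lamTil * x) - m / 2 * x ^ 2)
          = fun x => f i x + 0 * x ^ 2 + -lamTil * x + 0 - m / 2 * x ^ 2 := by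
        funext x; ring
      rw [e]; exact h
    have h1 : m / 2 * (phat i - ptil i) ^ 2 ≤
        (f i (phat i) - lamTil * phat i) - (f i (ptil i) - lamTil * ptil i) :=
      strong_min m (fun x => f i x - lamTil * x) hgconv (plo i) (phi i)
        (ptil i) (phat i) hpt hphat hptmin
    have hgconv2 : ConvexOn ℝ Set.univ
        (fun x => (f i x + (dhat i - x) ^ 2 / (2 * a * n) + zeta * (dhat i - x))
          - m / 2 * x ^ 2) := by
      have h := conv_aux (f i) (hf i) m (1 / (2 * a * n))
        ((-(2 * dhat i)) / (2 * a * n) - zeta)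
        (dhat i ^ 2 / (2 * a * n) + zeta * dhat i) hk (hf'' i)
      have e : (fun x => (f i x + (dhat i - x) ^ 2 / (2 * a * n) + zeta * (dhat i - x))
            - m / 2 * x ^ 2)
          = fun x => f i x + 1 / (2 * a * n) * x ^ 2
              + ((-(2 * dhat i)) / (2 * a * n) - zeta) * x
              + (dhat i ^ 2 / (2 * a * n) + zeta * dhat i) - m / 2 * x ^ 2 := by
        funext x; ring
      rw [e]; exact h
    have hminp : ∀ x ∈ Set.Icc (plo i) (phi i),
        (f i (phat i) + (dhat i - phat i) ^ 2 / (2 * a * n) + zeta * (dhat i - phat i)) ≤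
        f i x + (dhat i - x) ^ 2 / (2 * a * n) + zeta * (dhat i - x) := by
      intro x hx
      have := hmin2 x hx (dhat i) hdhat
      linarith
    have h2 : m / 2 * (ptil i - phat i) ^ 2 ≤
        (f i (ptil i) + (dhat i - ptil i) ^ 2 / (2 * a * n) + zeta * (dhat i - ptil i))
        - (f i (phat i) + (dhat i - phat i) ^ 2 / (2 * a * n) + zeta * (dhat i - phat i)) :=
      strong_min m _ hgconv2 (plo i) (phi i) (phat i) (ptil i) hphat hpt hminp
    have hcomb : m * (phat i - ptil i) ^ 2 ≤
        (zeta - lamTil) * (phat i - ptil i) +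
          ((dhat i - ptil i) + (dhat i - phat i)) * (phat i - ptil i) / (2 * a * n) := by
      have hre : (zeta - lamTil) * (phat i - ptil i) +
            ((dhat i - ptil i) + (dhat i - phat i)) * (phat i - ptil i) / (2 * a * n)
          = ((f i (phat i) - lamTil * phat i) - (f i (ptil i) - lamTil * ptil i)) +
            ((f i (ptil i) + (dhat i - ptil i) ^ 2 / (2 * a * n) + zeta * (dhat i - ptil i))
            - (f i (phat i) + (dhat i - phat i) ^ 2 / (2 * a * n)
                + zeta * (dhat i - phat i))) := by
        ring
      have hsq : m * (phat i - ptil i) ^ 2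
          = m / 2 * (phat i - ptil i) ^ 2 + m / 2 * (ptil i - phat i) ^ 2 := by ring
      linarith
    have hs : |(dhat i - ptil i) + (dhat i - phat i)| ≤ 2 * sa := by
      have b1 := hsig (ptil i) hpt (dhat i) hdhat
      have b2 := hsig (phat i) hphat (dhat i) hdhat
      calc |(dhat i - ptil i) + (dhat i - phat i)|
          ≤ |dhat i - ptil i| + |dhat i - phat i| := abs_add_le _ _
        _ ≤ 2 * sa := by linarith
    have hb1 : (zeta - lamTil) * (phat i - ptil i) ≤ (sa / a / n) * |phat i - ptil i| := by
      calc (zeta - lamTil) * (phat i - ptil i) ≤ |(zeta - lamTil) * (phat i - ptil i)| :=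
            le_abs_self _
        _ = |zeta - lamTil| * |phat i - ptil i| := abs_mul _ _
        _ ≤ (sa / a / n) * |phat i - ptil i| :=
            mul_le_mul_of_nonneg_right hzeta' (abs_nonneg _)
    have hb2 : ((dhat i - ptil i) + (dhat i - phat i)) * (phat i - ptil i) / (2 * a * n)
        ≤ 2 * sa * |phat i - ptil i| / (2 * a * n) := by
      apply (div_le_div_iff_of_pos_right h2an).mpr
      calc ((dhat i - ptil i) + (dhat i - phat i)) * (phat i - ptil i)
          ≤ |((dhat i - ptil i) + (dhat i - phat i)) * (phat i - ptil i)| := le_abs_self _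
        _ = |(dhat i - ptil i) + (dhat i - phat i)| * |phat i - ptil i| := abs_mul _ _
        _ ≤ 2 * sa * |phat i - ptil i| := mul_le_mul_of_nonneg_right hs (abs_nonneg _)
    have hfin : m * (phat i - ptil i) ^ 2 ≤ 2 * (sa / a / n) * |phat i - ptil i| := by
      have hre2 : 2 * sa * |phat i - ptil i| / (2 * a * n)
          = (sa / a / n) * |phat i - ptil i| := by
        field_simp
      linarith
    have := abs_le_div_aux m (2 * (sa / a / n)) (phat i - ptil i) hm hL0 hfin
    rw [heqfin] at this
    exact this
  · -- d side
    have hgconv : ConvexOn ℝ Set.univ (fun x => (lamTil * x - u i x) - m / 2 * x ^ 2) := by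
      have h := conv_aux (fun x => -(u i x)) hnu m 0 lamTil 0 le_rfl hnu''
      have e : (fun x => (lamTil * x - u i x) - m / 2 * x ^ 2)
          = fun x => -(u i x) + 0 * x ^ 2 + lamTil * x + 0 - m / 2 * x ^ 2 := by
        funext x; ring
      rw [e]; exact h
    have h1 : m / 2 * (dhat i - dtil i) ^ 2 ≤
        (lamTil * dhat i - u i (dhat i)) - (lamTil * dtil i - u i (dtil i)) :=
      strong_min m (fun x => lamTil * x - u i x) hgconv (dlo i) (dhi i)
        (dtil i) (dhat i) hdt hdhat hdtmin
    have hgconv2 : ConvexOn ℝ Set.univ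
        (fun x => (-(u i x) + (x - phat i) ^ 2 / (2 * a * n) + zeta * (x - phat i))
          - m / 2 * x ^ 2) := by
      have h := conv_aux (fun x => -(u i x)) hnu m (1 / (2 * a * n))
        ((-(2 * phat i)) / (2 * a * n) + zeta)
        (phat i ^ 2 / (2 * a * n) - zeta * phat i) hk hnu''
      have e : (fun x => (-(u i x) + (x - phat i) ^ 2 / (2 * a * n) + zeta * (x - phat i))
            - m / 2 * x ^ 2)
          = fun x => -(u i x) + 1 / (2 * a * n) * x ^ 2
              + ((-(2 * phat i)) / (2 * a * n) + zeta) * x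
              + (phat i ^ 2 / (2 * a * n) - zeta * phat i) - m / 2 * x ^ 2 := by
        funext x; ring
      rw [e]; exact h
    have hmind : ∀ y ∈ Set.Icc (dlo i) (dhi i),
        (-(u i (dhat i)) + (dhat i - phat i) ^ 2 / (2 * a * n) + zeta * (dhat i - phat i)) ≤
        -(u i y) + (y - phat i) ^ 2 / (2 * a * n) + zeta * (y - phat i) := by
      intro y hy
      have := hmin2 (phat i) hphat y hy
      linarith
    have h2 : m / 2 * (dtil i - dhat i) ^ 2 ≤
        (-(u i (dtil i)) + (dtil i - phat i) ^ 2 / (2 * a * n) + zeta * (dtil i - phat i))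
        - (-(u i (dhat i)) + (dhat i - phat i) ^ 2 / (2 * a * n) + zeta * (dhat i - phat i)) :=
      strong_min m _ hgconv2 (dlo i) (dhi i) (dhat i) (dtil i) hdhat hdt hmind
    have hcomb : m * (dhat i - dtil i) ^ 2 ≤
        (lamTil - zeta) * (dhat i - dtil i) -
          ((dtil i - phat i) + (dhat i - phat i)) * (dhat i - dtil i) / (2 * a * n) := by
      have hre : (lamTil - zeta) * (dhat i - dtil i) -
            ((dtil i - phat i) + (dhat i - phat i)) * (dhat i - dtil i) / (2 * a * n)
          = ((lamTil * dhat i - u i (dhat i)) - (lamTil * dtil i - u i (dtil i))) +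
            ((-(u i (dtil i)) + (dtil i - phat i) ^ 2 / (2 * a * n) + zeta * (dtil i - phat i))
            - (-(u i (dhat i)) + (dhat i - phat i) ^ 2 / (2 * a * n)
                + zeta * (dhat i - phat i))) := by
        ring
      have hsq : m * (dhat i - dtil i) ^ 2
          = m / 2 * (dhat i - dtil i) ^ 2 + m / 2 * (dtil i - dhat i) ^ 2 := by ring
      linarith
    have hs : |(dtil i - phat i) + (dhat i - phat i)| ≤ 2 * sa := by
      have b1 := hsig (phat i) hphat (dtil i) hdt
      have b2 := hsig (phat i) hphat (dhat i) hdhat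
      calc |(dtil i - phat i) + (dhat i - phat i)|
          ≤ |dtil i - phat i| + |dhat i - phat i| := abs_add_le _ _
        _ ≤ 2 * sa := by linarith
    have hb1 : (lamTil - zeta) * (dhat i - dtil i) ≤ (sa / a / n) * |dhat i - dtil i| := by
      have habs : |lamTil - zeta| ≤ sa / a / n := by rw [abs_sub_comm]; exact hzeta'
      calc (lamTil - zeta) * (dhat i - dtil i) ≤ |(lamTil - zeta) * (dhat i - dtil i)| :=
            le_abs_self _
        _ = |lamTil - zeta| * |dhat i - dtil i| := abs_mul _ _
        _ ≤ (sa / a / n) * |dhat i - dtil i| :=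
            mul_le_mul_of_nonneg_right habs (abs_nonneg _)
    have hb2 : -(((dtil i - phat i) + (dhat i - phat i)) * (dhat i - dtil i) / (2 * a * n))
        ≤ 2 * sa * |dhat i - dtil i| / (2 * a * n) := by
      rw [← neg_div]
      apply (div_le_div_iff_of_pos_right h2an).mpr
      calc -(((dtil i - phat i) + (dhat i - phat i)) * (dhat i - dtil i))
          ≤ |((dtil i - phat i) + (dhat i - phat i)) * (dhat i - dtil i)| := neg_le_abs _
        _ = |(dtil i - phat i) + (dhat i - phat i)| * |dhat i - dtil i| := abs_mul _ _
        _ ≤ 2 * sa * |dhat i - dtil i| := mul_le_mul_of_nonneg_right hs (abs_nonneg _)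
    have hfin : m * (dhat i - dtil i) ^ 2 ≤ 2 * (sa / a / n) * |dhat i - dtil i| := by
      have hre2 : 2 * sa * |dhat i - dtil i| / (2 * a * n)
          = (sa / a / n) * |dhat i - dtil i| := by
        field_simp
      linarith
    have := abs_le_div_aux m (2 * (sa / a / n)) (dhat i - dtil i) hm hL0 hfin
    rw [heqfin] at this
    exact this
end

section
/- Let I ≥ 2 be an integer, a > 0, m > 0 with a·m ≥ (2I−4)/(I−1). Then for all real numbers c_1,…,c_I, e_1,…,e_I with c_i ≥ m and e_i ≥ m for each i, and all real numbers x_{1,1}, x_{1,2}, …, x_{I,1}, x_{I,2}, the following inequality holds: Σ_{i=1}^I (c_i·x_{i,1}² + e_i·x_{i,2}²) + (1/(a(I−1)))·Σ_{i=1}^I (x_{i,1} − x_{i,2})² − (1/(aI))·(Σ_{i=1}^I (x_{i,1} − x_{i,2}))² ≥ 0. -/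
open Finset

/-- Positive semidefiniteness of the Hessian of the energy sharing potential function
under the market-sensitivity condition A4. -/
theorem potential_hessian_psd
    (I : ℕ) (hI : 2 ≤ I) (a m : ℝ) (ha : 0 < a) (hm : 0 < m)
    (ham : (2 * (I : ℝ) - 4) / ((I : ℝ) - 1) ≤ a * m)
    (c e : Fin I → ℝ) (hc : ∀ i, m ≤ c i) (he : ∀ i, m ≤ e i)
    (x1 x2 : Fin I → ℝ) :
    0 ≤ ∑ i, (c i * (x1 i) ^ 2 + e i * (x2 i) ^ 2) +
        (1 / (a * ((I : ℝ) - 1))) * ∑ i, (x1 i - x2 i) ^ 2 -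
        (1 / (a * (I : ℝ))) * (∑ i, (x1 i - x2 i)) ^ 2 := by
  have hn2 : (2 : ℝ) ≤ (I : ℝ) := by exact_mod_cast hI
  have hn1 : (0 : ℝ) < (I : ℝ) - 1 := by linarith
  have hnpos : (0 : ℝ) < (I : ℝ) := by linarith
  -- Cauchy-Schwarz bound
  have hcs : (∑ i, (x1 i - x2 i)) ^ 2 ≤ (I : ℝ) * ∑ i, (x1 i - x2 i) ^ 2 := by
    have := sq_sum_le_card_mul_sum_sq (s := (univ : Finset (Fin I)))
      (f := fun i => x1 i - x2 i)
    simpa using this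
  have hB : 0 ≤ 1 / (a * (I : ℝ)) := by positivity
  have step1 : (1 / (a * (I : ℝ))) * (∑ i, (x1 i - x2 i)) ^ 2 ≤
      (1 / a) * ∑ i, (x1 i - x2 i) ^ 2 := by
    calc (1 / (a * (I : ℝ))) * (∑ i, (x1 i - x2 i)) ^ 2
        ≤ (1 / (a * (I : ℝ))) * ((I : ℝ) * ∑ i, (x1 i - x2 i) ^ 2) :=
          mul_le_mul_of_nonneg_left hcs hB
      _ = (1 / a) * ∑ i, (x1 i - x2 i) ^ 2 := by
          field_simp
  -- reduce to pointwise inequality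
  have hkey : 0 ≤ ∑ i, (c i * (x1 i) ^ 2 + e i * (x2 i) ^ 2) +
      (1 / (a * ((I : ℝ) - 1)) - 1 / a) * ∑ i, (x1 i - x2 i) ^ 2 := by
    have hcoef : 1 / (a * ((I : ℝ) - 1)) - 1 / a = -((2 * (I : ℝ) - 4) / ((I : ℝ) - 1)) / (2 * a) := by
      field_simp
      ring
    rw [hcoef, Finset.mul_sum, ← Finset.sum_add_distrib]
    apply Finset.sum_nonneg
    intro i _
    have h1 := hc i
    have h2 := he i
    have hy : (x1 i - x2 i) ^ 2 ≤ 2 * (x1 i) ^ 2 + 2 * (x2 i) ^ 2 := by nlinarith [sq_nonneg (x1 i + x2 i)]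
    have h3 : (2 * (I : ℝ) - 4) / ((I : ℝ) - 1) ≤ a * m := ham
    have h4 : (0 : ℝ) ≤ (2 * (I : ℝ) - 4) / ((I : ℝ) - 1) := by
      apply div_nonneg <;> linarith
    set k := (2 * (I : ℝ) - 4) / ((I : ℝ) - 1) with hk
    have h5 : k / (2 * a) ≤ m / 2 := by
      rw [div_le_div_iff₀ (by linarith) (by norm_num)]
      nlinarith
    have h6 : k / (2 * a) * (x1 i - x2 i) ^ 2 ≤ m / 2 * (2 * (x1 i) ^ 2 + 2 * (x2 i) ^ 2) := by
      apply mul_le_mul h5 hy (sq_nonneg _) (by linarith)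
    have h7 : m / 2 * (2 * (x1 i) ^ 2 + 2 * (x2 i) ^ 2) ≤ c i * (x1 i) ^ 2 + e i * (x2 i) ^ 2 := by
      nlinarith [sq_nonneg (x1 i), sq_nonneg (x2 i)]
    have h8 : -k / (2 * a) * (x1 i - x2 i) ^ 2 = -(k / (2 * a) * (x1 i - x2 i) ^ 2) := by ring
    linarith [h6, h7, h8.ge, h8.le]
  nlinarith [step1, hkey, Finset.sum_nonneg (fun i (_ : i ∈ univ) => sq_nonneg (x1 i - x2 i))]
end

section
/- Let I ≥ 2 be an integer, a > 0, m > 0 with a·m ≥ (2I−4)/(I−1), and for each i ∈ {1,…,I} let f_i, u_i : ℝ → ℝ be twice differentiable with f_i''(x) ≥ m and −u_i''(x) ≥ m for all x. Then the function φ : ℝ^I × ℝ^I → ℝ, φ(p, d) = Σ_{i=1}^I f_i(p_i) − Σ_{i=1}^I u_i(d_i) + (Σ_{i=1}^I (d_i − p_i)²)/(2a(I−1)) − (Σ_{i=1}^I d_i − Σ_{i=1}^I p_i)²/(2aI), is convex on ℝ^I × ℝ^I. -/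
open Finset

section Helpers

variable {E : Type*} [AddCommGroup E] [Module ℝ E]

private lemma convexOn.add' {s : Set E} {f g : E → ℝ} (hf : ConvexOn ℝ s f)
    (hg : ConvexOn ℝ s g) : ConvexOn ℝ s (fun x => f x + g x) := hf.add hg

private lemma convexOn.smul' {s : Set E} {f : E → ℝ} {c : ℝ} (hc : 0 ≤ c)
    (hf : ConvexOn ℝ s f) : ConvexOn ℝ s (fun x => c * f x) := hf.smul hc

private lemma convexOn_finset_sum {ι : Type*} (t : Finset ι) {s : Set E} (hs : Convex ℝ s)
    (F : ι → E → ℝ) (h : ∀ i ∈ t, ConvexOn ℝ s (F i)) :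
    ConvexOn ℝ s (fun x => ∑ i ∈ t, F i x) := by
  induction t using Finset.cons_induction with
  | empty => simpa using convexOn_const 0 hs
  | cons i t hit ih =>
      simp only [Finset.sum_cons]
      exact convexOn.add' (h i (Finset.mem_cons_self i t))
        (ih fun j hj => h j (Finset.mem_cons_of_mem hj))

private lemma convexOn_comp_linear {g : ℝ → ℝ} (hg : ConvexOn ℝ Set.univ g) (ℓ : E → ℝ)
    (hadd : ∀ x y, ℓ (x + y) = ℓ x + ℓ y) (hsmul : ∀ (c : ℝ) x, ℓ (c • x) = c * ℓ x) :
    ConvexOn ℝ Set.univ (fun x => g (ℓ x)) := by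
  refine ⟨convex_univ, fun x _ y _ b c hb hc hbc => ?_⟩
  have : ℓ (b • x + c • y) = b * ℓ x + c * ℓ y := by rw [hadd, hsmul, hsmul]
  simp only [this]
  have := hg.2 (Set.mem_univ (ℓ x)) (Set.mem_univ (ℓ y)) hb hc hbc
  simpa [smul_eq_mul] using this

private lemma convexOn_sq_linear (ℓ : E → ℝ)
    (hadd : ∀ x y, ℓ (x + y) = ℓ x + ℓ y) (hsmul : ∀ (c : ℝ) x, ℓ (c • x) = c * ℓ x) :
    ConvexOn ℝ Set.univ (fun x => (ℓ x) ^ 2) :=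
  convexOn_comp_linear (Even.convexOn_pow (even_two)) ℓ hadd hsmul

/-- If `g` is `C²` with second derivative at least `m`, then `g x - m/2 x²` is convex. -/
private lemma convexOn_strong (g : ℝ → ℝ) (m : ℝ) (hg : ContDiff ℝ 2 g)
    (h : ∀ x, m ≤ iteratedDeriv 2 g x) :
    ConvexOn ℝ Set.univ (fun x => g x - m / 2 * x ^ 2) := by
  have h2 : ContDiff ℝ ((1 : WithTop ℕ∞) + 1) g := by
    have : ((1 : WithTop ℕ∞) + 1) = 2 := by norm_num
    rw [this]; exact hg
  have hgd : Differentiable ℝ g := hg.differentiable (by norm_num)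
  have hg1 : ContDiff ℝ 1 (deriv g) := (contDiff_succ_iff_deriv.mp h2).2.2
  have hdg : Differentiable ℝ (deriv g) := hg1.differentiable one_ne_zero
  have hq : ∀ x : ℝ, deriv (fun x => g x - m / 2 * x ^ 2) x = deriv g x - m * x := by
    intro x
    rw [deriv_fun_sub (hgd x) (by fun_prop)]
    simp [deriv_const_mul_field]
    ring
  have hqf : deriv (fun x => g x - m / 2 * x ^ 2) = fun x => deriv g x - m * x :=
    funext hq
  apply convexOn_univ_of_deriv2_nonneg
  · exact hgd.sub (by fun_prop)
  · rw [hqf]; exact hdg.sub (by fun_prop)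
  · intro x
    have : deriv^[2] (fun x => g x - m / 2 * x ^ 2) x
        = deriv (fun x => deriv g x - m * x) x := by
      simp only [Function.iterate_succ, Function.iterate_zero, Function.comp_apply, id_eq]
      rw [hqf]
    rw [this, deriv_fun_sub (hdg x) (by fun_prop)]
    have hid : deriv (fun x : ℝ => m * x) x = m := by
      simpa using ((hasDerivAt_id x).const_mul m).deriv
    rw [hid]
    have h2g : deriv (deriv g) x = iteratedDeriv 2 g x := by
      rw [iteratedDeriv_succ, iteratedDeriv_one]
    rw [h2g]
    linarith [h x]

end Helpers

/-- Under assumption A4, the potential function `φ` of the energy sharing game is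
convex on `ℝ^I × ℝ^I`. -/
theorem potential_convex
    (I : ℕ) (hI : 2 ≤ I) (a m : ℝ) (ha : 0 < a) (hm : 0 < m)
    (ham : (2 * (I : ℝ) - 4) / ((I : ℝ) - 1) ≤ a * m)
    (f u : Fin I → ℝ → ℝ)
    (hf : ∀ i, ContDiff ℝ 2 (f i)) (hu : ∀ i, ContDiff ℝ 2 (u i))
    (hf'' : ∀ i, ∀ x : ℝ, m ≤ iteratedDeriv 2 (f i) x)
    (hu'' : ∀ i, ∀ x : ℝ, iteratedDeriv 2 (u i) x ≤ -m) :
    ConvexOn ℝ Set.univ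
      (fun pd : (Fin I → ℝ) × (Fin I → ℝ) =>
        ∑ i, f i (pd.1 i) - ∑ i, u i (pd.2 i) +
          (∑ i, (pd.2 i - pd.1 i) ^ 2) / (2 * a * ((I : ℝ) - 1)) -
          (∑ i, pd.2 i - ∑ i, pd.1 i) ^ 2 / (2 * a * (I : ℝ))) := by
  have hI2 : (2 : ℝ) ≤ (I : ℝ) := by exact_mod_cast hI
  have hI1 : (0 : ℝ) < (I : ℝ) - 1 := by linarith
  have hIpos : (0 : ℝ) < (I : ℝ) := by linarith
  set k : ℝ := ((I : ℝ) - 2) / (2 * a * ((I : ℝ) - 1)) with hk_def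
  set cc : ℝ := m / 2 - 2 * k with hcc_def
  set w : ℝ := 1 / (4 * a * (I : ℝ)) with hw_def
  have hden : (0 : ℝ) < 2 * a * ((I : ℝ) - 1) := by positivity
  have hk0 : 0 ≤ k := div_nonneg (by linarith) hden.le
  have ham' : 2 * (I : ℝ) - 4 ≤ a * m * ((I : ℝ) - 1) := by
    rw [div_le_iff₀ hI1] at ham; linarith
  have hk_eq : k * (2 * a * ((I : ℝ) - 1)) = (I : ℝ) - 2 := by
    rw [hk_def]; exact div_mul_cancel₀ _ hden.ne'
  have hcc0 : 0 ≤ cc := by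
    rw [hcc_def]
    nlinarith [hk_eq, ham', mul_pos ha hI1]
  have hw0 : 0 ≤ w := by positivity
  -- the convex decomposition
  have hEq : (fun pd : (Fin I → ℝ) × (Fin I → ℝ) =>
        ∑ i, f i (pd.1 i) - ∑ i, u i (pd.2 i) +
          (∑ i, (pd.2 i - pd.1 i) ^ 2) / (2 * a * ((I : ℝ) - 1)) -
          (∑ i, pd.2 i - ∑ i, pd.1 i) ^ 2 / (2 * a * (I : ℝ)))
      = (fun pd : (Fin I → ℝ) × (Fin I → ℝ) =>
          (∑ i, (f i (pd.1 i) - m / 2 * (pd.1 i) ^ 2)) +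
          (∑ i, ((fun x => - u i x) (pd.2 i) - m / 2 * (pd.2 i) ^ 2)) +
          (∑ i, (k * (pd.1 i + pd.2 i) ^ 2 + (cc * (pd.1 i) ^ 2 + cc * (pd.2 i) ^ 2))) +
          w * ∑ i, ∑ j, ((pd.2 i - pd.1 i) - (pd.2 j - pd.1 j)) ^ 2) := by
    funext pd
    obtain ⟨p, d⟩ := pd
    simp only
    have key : ∑ i, ∑ j, ((d i - p i) - (d j - p j)) ^ 2
        = 2 * (I : ℝ) * ∑ i, (d i - p i) ^ 2 - 2 * (∑ i, (d i - p i)) ^ 2 := by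
      have expand : ∀ i j, ((d i - p i) - (d j - p j)) ^ 2
          = (d i - p i) ^ 2 - 2 * ((d i - p i) * (d j - p j)) + (d j - p j) ^ 2 := by
        intro i j; ring
      simp only [expand]
      simp only [Finset.sum_add_distrib, Finset.sum_sub_distrib, Finset.sum_const,
        Finset.card_univ, Fintype.card_fin, nsmul_eq_mul, ← Finset.mul_sum, ← Finset.sum_mul]
      ring
    rw [key]
    have h1 : ∑ i, (f i (p i) - m / 2 * (p i) ^ 2)
        = (∑ i, f i (p i)) - m / 2 * ∑ i, (p i) ^ 2 := by
      rw [Finset.sum_sub_distrib, Finset.mul_sum]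
    have h2 : ∑ i, ((fun x => - u i x) (d i) - m / 2 * (d i) ^ 2)
        = - (∑ i, u i (d i)) - m / 2 * ∑ i, (d i) ^ 2 := by
      rw [Finset.sum_sub_distrib, Finset.mul_sum, Finset.sum_neg_distrib]
    have h3 : ∑ i, (k * (p i + d i) ^ 2 + (cc * (p i) ^ 2 + cc * (d i) ^ 2))
        = k * (∑ i, (p i) ^ 2 + 2 * ∑ i, p i * d i + ∑ i, (d i) ^ 2)
          + cc * ∑ i, (p i) ^ 2 + cc * ∑ i, (d i) ^ 2 := by
      simp only [Finset.sum_add_distrib, ← Finset.mul_sum]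
      rw [show (∑ i, (p i + d i) ^ 2)
          = ∑ i, ((p i) ^ 2 + 2 * (p i * d i) + (d i) ^ 2) from
        Finset.sum_congr rfl (fun i _ => by ring)]
      rw [Finset.sum_add_distrib, Finset.sum_add_distrib, ← Finset.mul_sum]
      ring
    have h4 : ∑ i, (d i - p i) ^ 2
        = ∑ i, (d i) ^ 2 - 2 * ∑ i, p i * d i + ∑ i, (p i) ^ 2 := by
      rw [show ∑ i, (d i - p i) ^ 2
          = ∑ i, ((d i) ^ 2 - 2 * (p i * d i) + (p i) ^ 2) by
        apply Finset.sum_congr rfl; intros; ring]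
      rw [Finset.sum_add_distrib, Finset.sum_sub_distrib, ← Finset.mul_sum]
    have h5 : ∑ i, (d i - p i) = ∑ i, d i - ∑ i, p i := Finset.sum_sub_distrib _ _
    rw [h1, h2, h3, h4, h5]
    rw [hk_def, hcc_def, hw_def, hk_def]
    field_simp
    ring
  rw [hEq]
  -- convexity of each piece
  refine convexOn.add' (convexOn.add' (convexOn.add' ?_ ?_) ?_) ?_
  · refine convexOn_finset_sum _ convex_univ _ (fun i _ => ?_)
    exact convexOn_comp_linear (convexOn_strong (f i) m (hf i) (hf'' i))
      (fun pd : (Fin I → ℝ) × (Fin I → ℝ) => pd.1 i) (fun x y => rfl) (fun c x => rfl)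
  · refine convexOn_finset_sum _ convex_univ _ (fun i _ => ?_)
    have hneg : ContDiff ℝ 2 (fun x => - u i x) := (hu i).neg
    have hneg'' : ∀ x, m ≤ iteratedDeriv 2 (fun x => - u i x) x := by
      intro x
      have : iteratedDeriv 2 (fun x => - u i x) x = - iteratedDeriv 2 (u i) x := by
        simpa using iteratedDeriv_neg 2 (u i) x
      rw [this]
      linarith [hu'' i x]
    exact convexOn_comp_linear (convexOn_strong _ m hneg hneg'')
      (fun pd : (Fin I → ℝ) × (Fin I → ℝ) => pd.2 i) (fun x y => rfl) (fun c x => rfl)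
  · refine convexOn_finset_sum _ convex_univ _ (fun i _ => ?_)
    refine convexOn.add' ?_ (convexOn.add' ?_ ?_)
    · exact convexOn.smul' hk0 (convexOn_sq_linear (fun pd : (Fin I → ℝ) × (Fin I → ℝ) => pd.1 i + pd.2 i)
        (fun x y => by simp [Prod.add_def]; ring) (fun c x => by simp [Prod.smul_def]; ring))
    · exact convexOn.smul' hcc0 (convexOn_sq_linear (fun pd : (Fin I → ℝ) × (Fin I → ℝ) => pd.1 i)
        (fun x y => rfl) (fun c x => rfl))
    · exact convexOn.smul' hcc0 (convexOn_sq_linear (fun pd : (Fin I → ℝ) × (Fin I → ℝ) => pd.2 i)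
        (fun x y => rfl) (fun c x => rfl))
  · refine convexOn.smul' hw0 ?_
    refine convexOn_finset_sum _ convex_univ _ (fun i _ => ?_)
    refine convexOn_finset_sum _ convex_univ _ (fun j _ => ?_)
    exact convexOn_sq_linear (fun pd : (Fin I → ℝ) × (Fin I → ℝ) => (pd.2 i - pd.1 i) - (pd.2 j - pd.1 j))
      (fun x y => by simp [Prod.add_def]; ring) (fun c x => by simp [Prod.smul_def]; ring)
end

section
/- Let n ≥ 1, let Y ⊆ ℝⁿ be a nonempty convex set, φ : ℝⁿ → ℝ a convex function, v ∈ ℝⁿ, and c > 0. Let λ⁰ ∈ ℝ, let y⁺ ∈ Y minimize y ↦ φ(y) − λ⁰·⟨v, y⟩ + (c/2)·⟨v, y⟩² over Y, and set λ⁺ = λ⁰ − c·⟨v, y⁺⟩. If (y*, λ*) ∈ Y × ℝ is a saddle point of L(y, λ) := φ(y) − λ·⟨v, y⟩ on Y × ℝ, then (λ⁺ − λ*)·(λ⁰ − λ⁺) ≥ 0, and consequently (λ⁺ − λ*)² ≤ (λ⁰ − λ*)² − (λ⁰ − λ⁺)². -/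
open Finset

/-- Per-iteration Fejér monotonicity of the price iterates of the energy sharing
bidding process. -/
theorem bidding_iteration_fejer
    (n : ℕ) (hn : 1 ≤ n)
    (Y : Set (Fin n → ℝ)) (hYne : Y.Nonempty) (hYconv : Convex ℝ Y)
    (φ : (Fin n → ℝ) → ℝ) (hφ : ConvexOn ℝ Set.univ φ)
    (v : Fin n → ℝ) (c : ℝ) (hc : 0 < c)
    (lam0 : ℝ) (yp : Fin n → ℝ) (hyp : yp ∈ Y)
    -- `y⁺` minimizes the regularized objective over `Y`
    (hypmin : ∀ y ∈ Y,
      φ yp - lam0 * (∑ i, v i * yp i) + (c / 2) * (∑ i, v i * yp i) ^ 2 ≤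
        φ y - lam0 * (∑ i, v i * y i) + (c / 2) * (∑ i, v i * y i) ^ 2)
    -- saddle point of `L(y, λ) = φ(y) − λ⟨v, y⟩`
    (ystar : Fin n → ℝ) (lamstar : ℝ) (hystar : ystar ∈ Y)
    (hsaddle₁ : ∀ lam : ℝ,
      φ ystar - lam * (∑ i, v i * ystar i) ≤
        φ ystar - lamstar * (∑ i, v i * ystar i))
    (hsaddle₂ : ∀ y ∈ Y,
      φ ystar - lamstar * (∑ i, v i * ystar i) ≤
        φ y - lamstar * (∑ i, v i * y i)) :
    0 ≤ ((lam0 - c * (∑ i, v i * yp i)) - lamstar) *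
        (lam0 - (lam0 - c * (∑ i, v i * yp i))) ∧
      ((lam0 - c * (∑ i, v i * yp i)) - lamstar) ^ 2 ≤
        (lam0 - lamstar) ^ 2 - (lam0 - (lam0 - c * (∑ i, v i * yp i))) ^ 2 := by
  set s : ℝ := ∑ i, v i * yp i with hs
  set t : ℝ := ∑ i, v i * ystar i with ht
  -- the saddle inequality in λ forces ⟨v, y*⟩ = 0
  have htz : t = 0 := by
    have h1 := hsaddle₁ (lamstar + 1)
    have h2 := hsaddle₁ (lamstar - 1)
    nlinarith
  -- key inequality from testing minimality at convex combinations
  have key : ∀ θ : ℝ, 0 < θ → θ ≤ 1 →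
      φ yp - lam0 * s + c * s ^ 2 - (c / 2) * θ * s ^ 2 ≤ φ ystar := by
    intro θ hθ0 hθ1
    set a : ℝ := 1 - θ with ha
    have ha0 : 0 ≤ a := by linarith
    have hθ0' : (0 : ℝ) ≤ θ := le_of_lt hθ0
    have hab : a + θ = 1 := by ring
    set z : Fin n → ℝ := a • yp + θ • ystar with hz
    have hzY : z ∈ Y := hYconv hyp hystar ha0 hθ0' hab
    have hsum : (∑ i, v i * z i) = a * s + θ * t := by
      simp only [hz, Pi.add_apply, Pi.smul_apply, smul_eq_mul, hs, ht,
        Finset.mul_sum]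
      rw [← Finset.sum_add_distrib]
      exact Finset.sum_congr rfl fun i _ => by ring
    have hφz : φ z ≤ a * φ yp + θ * φ ystar :=
      hφ.2 (Set.mem_univ yp) (Set.mem_univ ystar) ha0 hθ0' hab
    have hmin := hypmin z hzY
    rw [hsum, htz] at hmin
    -- hmin : φ yp - lam0*s + (c/2)*s² ≤ φ z - lam0*(a*s) + (c/2)*(a*s+θ*0)²
    simp only [mul_zero, add_zero] at hmin
    clear_value z a
    have h3 : φ yp - lam0 * s + (c / 2) * s ^ 2 ≤
        a * φ yp + θ * φ ystar - lam0 * (a * s) + (c / 2) * (a * s) ^ 2 := by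
      linarith [hmin, hφz]
    -- divide by θ
    rw [ha] at h3
    have h4 : θ * (φ yp - lam0 * s + c * s ^ 2 - (c / 2) * θ * s ^ 2) ≤
        θ * φ ystar := by nlinarith [h3]
    exact le_of_mul_le_mul_left (by linarith [h4]) hθ0
  -- take θ → 0 : φ yp - lam0*s + c*s² ≤ φ ystar
  have hA : φ yp - lam0 * s + c * s ^ 2 ≤ φ ystar := by
    by_contra hcon
    push_neg at hcon
    set A : ℝ := φ yp - lam0 * s + c * s ^ 2 - φ ystar with hAdef
    have hApos : 0 < A := by simp only [hAdef]; linarith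
    have hd : (0:ℝ) < c * s ^ 2 + 1 := by positivity
    set θ : ℝ := min 1 (A / (c * s ^ 2 + 1)) with hθ
    have hθpos : 0 < θ := lt_min one_pos (by positivity)
    have hθ1 : θ ≤ 1 := min_le_left _ _
    have hθ2 : θ ≤ A / (c * s ^ 2 + 1) := min_le_right _ _
    have h6 : θ * (c * s ^ 2 + 1) ≤ A := (le_div_iff₀ hd).mp hθ2
    have h5 := key θ hθpos hθ1
    nlinarith [h5, h6, mul_nonneg hθpos.le (mul_nonneg hc.le (sq_nonneg s))]
  have hB := hsaddle₂ yp hyp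
  rw [htz] at hB
  -- hB : φ ystar - lamstar * 0 ≤ φ yp - lamstar * s
  have hmain : 0 ≤ (lam0 - c * s - lamstar) * (c * s) := by nlinarith [hA, hB]
  constructor
  · have : lam0 - (lam0 - c * s) = c * s := by ring
    rw [this]; exact hmain
  · nlinarith [hmain]
end

section
/- Let W ⊆ ℝ be nonempty, and let (λᵏ)_{k≥0} be a real sequence such that for every λ* ∈ W and every k, (λᵏ⁺¹ − λ*)² ≤ (λᵏ − λ*)² − (λᵏ − λᵏ⁺¹)², and such that every cluster point of (λᵏ) belongs to W. Then (λᵏ) converges to some point of W. -/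
open Filter

/-- Fejér-monotone convergence: if a real sequence is Fejér monotone with respect to a
nonempty set `W` (with the stated quantitative decrease) and all its cluster points lie
in `W`, then it converges to a point of `W`. -/
theorem fejer_monotone_convergence
    (W : Set ℝ) (hW : W.Nonempty) (lam : ℕ → ℝ)
    (hfejer : ∀ lamstar ∈ W, ∀ k : ℕ,
      (lam (k + 1) - lamstar) ^ 2 ≤
        (lam k - lamstar) ^ 2 - (lam k - lam (k + 1)) ^ 2)
    (hcluster : ∀ x : ℝ, MapClusterPt x atTop lam → x ∈ W) :
    ∃ lamstar ∈ W, Tendsto lam atTop (nhds lamstar) := by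
  -- distance-squared to any point of W is antitone
  have hanti : ∀ w ∈ W, Antitone (fun k => (lam k - w) ^ 2) := by
    intro w hw
    apply antitone_nat_of_succ_le
    intro k
    have := hfejer w hw k
    nlinarith [sq_nonneg (lam k - lam (k + 1))]
  obtain ⟨w, hw⟩ := hW
  -- lam is bounded, so lies in a compact interval
  set c := Real.sqrt ((lam 0 - w) ^ 2) with hc
  have hmem : ∀ k, lam k ∈ Set.Icc (w - c) (w + c) := by
    intro k
    have h1 : (lam k - w) ^ 2 ≤ (lam 0 - w) ^ 2 := hanti w hw (Nat.zero_le k)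
    have h2 : |lam k - w| ≤ c := by
      rw [hc, ← Real.sqrt_sq_eq_abs]
      exact Real.sqrt_le_sqrt h1
    rw [abs_le] at h2
    constructor <;> linarith [h2.1, h2.2]
  obtain ⟨x, -, φ, hφ, hlim⟩ :=
    (isCompact_Icc (a := w - c) (b := w + c)).tendsto_subseq hmem
  have hxW : x ∈ W := hcluster x (.of_comp hφ.tendsto_atTop hlim.mapClusterPt)
  refine ⟨x, hxW, ?_⟩
  -- g k = (lam k - x)^2 is antitone, bounded below, converges to its infimum
  set g : ℕ → ℝ := fun k => (lam k - x) ^ 2 with hg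
  have hganti : Antitone g := hanti x hxW
  have hbdd : BddBelow (Set.range g) := ⟨0, by rintro _ ⟨k, rfl⟩; positivity⟩
  have hgL : Tendsto g atTop (nhds (⨅ k, g k)) := tendsto_atTop_ciInf hganti hbdd
  -- along the subsequence, g → 0
  have hg0 : Tendsto (g ∘ φ) atTop (nhds 0) := by
    have : Tendsto (fun k => ((lam ∘ φ) k - x) ^ 2) atTop (nhds ((x - x) ^ 2)) := by
      exact ((hlim.sub tendsto_const_nhds).pow 2)
    simpa [hg, Function.comp_def] using this
  have hL0 : (⨅ k, g k) = 0 :=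
    tendsto_nhds_unique (hgL.comp hφ.tendsto_atTop) hg0
  rw [hL0] at hgL
  -- conclude lam → x
  have hsq : Tendsto (fun k => Real.sqrt (g k)) atTop (nhds 0) := by
    have := (Real.continuous_sqrt.tendsto 0).comp hgL
    simpa [Function.comp_def] using this
  have : Tendsto (fun k => |lam k - x|) atTop (nhds 0) := by
    simpa [hg, Real.sqrt_sq_eq_abs] using hsq
  rw [tendsto_iff_dist_tendsto_zero]
  simpa [Real.dist_eq] using this
end

section
/- Let n ≥ 1, let Y ⊆ ℝⁿ be a nonempty compact convex set, φ : ℝⁿ → ℝ a continuous convex function, v ∈ ℝⁿ, and c > 0. Define L(y, λ) = φ(y) − λ·⟨v, y⟩ and suppose L has a saddle point on Y × ℝ. Starting from any λ⁰ ∈ ℝ, define iterates by choosing yᵏ⁺¹ ∈ argmin_{y ∈ Y} [φ(y) − λᵏ·⟨v, y⟩ + (c/2)·⟨v, y⟩²] and setting λᵏ⁺¹ = λᵏ − c·⟨v, yᵏ⁺¹⟩. Then the sequence (λᵏ) converges to some λ* ∈ ℝ such that (y*, λ*) is a saddle point of L on Y × ℝ for some y* ∈ Y. -/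
open Finset Filter

/-- Abstract convergence of the energy sharing bidding process: the price iterates of
the dual-update algorithm converge to the price component of a saddle point of the
Lagrangian `L(y, λ) = φ(y) − λ⟨v, y⟩`. -/
theorem bidding_process_converges_abstract
    (n : ℕ) (hn : 1 ≤ n)
    (Y : Set (Fin n → ℝ)) (hYne : Y.Nonempty) (hYconv : Convex ℝ Y)
    (hYcomp : IsCompact Y)
    (φ : (Fin n → ℝ) → ℝ) (hφcont : Continuous φ) (hφ : ConvexOn ℝ Set.univ φ)
    (v : Fin n → ℝ) (c : ℝ) (hc : 0 < c)
    -- the Lagrangian has a saddle point on Y × ℝ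
    (hsaddle : ∃ ystar ∈ Y, ∃ lamstar : ℝ,
      (∀ lam : ℝ, φ ystar - lam * (∑ i, v i * ystar i) ≤
        φ ystar - lamstar * (∑ i, v i * ystar i)) ∧
      (∀ y ∈ Y, φ ystar - lamstar * (∑ i, v i * ystar i) ≤
        φ y - lamstar * (∑ i, v i * y i)))
    -- the iterates
    (y : ℕ → (Fin n → ℝ)) (lam : ℕ → ℝ)
    (hymem : ∀ k : ℕ, y (k + 1) ∈ Y)
    (hymin : ∀ k : ℕ, ∀ z ∈ Y,
      φ (y (k + 1)) - lam k * (∑ i, v i * y (k + 1) i) +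
          (c / 2) * (∑ i, v i * y (k + 1) i) ^ 2 ≤
        φ z - lam k * (∑ i, v i * z i) + (c / 2) * (∑ i, v i * z i) ^ 2)
    (hlam : ∀ k : ℕ, lam (k + 1) = lam k - c * (∑ i, v i * y (k + 1) i)) :
    ∃ lamstar : ℝ, Tendsto lam atTop (nhds lamstar) ∧
      ∃ ystar ∈ Y,
        (∀ lam' : ℝ, φ ystar - lam' * (∑ i, v i * ystar i) ≤
          φ ystar - lamstar * (∑ i, v i * ystar i)) ∧
        (∀ z ∈ Y, φ ystar - lamstar * (∑ i, v i * ystar i) ≤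
          φ z - lamstar * (∑ i, v i * z i)) := by
  obtain ⟨ystar, hys, lamstar, hsad1, hsad2⟩ := hsaddle
  -- the saddle first condition forces zero imbalance at ystar
  have hS0 : (∑ i, v i * ystar i) = 0 := by
    have h1 := hsad1 (lamstar - 1)
    have h2 := hsad1 (lamstar + 1)
    nlinarith [h1, h2]
  -- key: y (k+1) exactly minimizes the plain Lagrangian at the updated price
  have keyA : ∀ k : ℕ, ∀ z ∈ Y,
      φ (y (k+1)) - (lam k - c * (∑ i, v i * y (k+1) i)) * (∑ i, v i * y (k+1) i) ≤
        φ z - (lam k - c * (∑ i, v i * y (k+1) i)) * (∑ i, v i * z i) := by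
    intro k z hz
    have hmain : ∀ t : ℝ, 0 < t → t ≤ 1 →
        t * (φ (y (k+1)) - φ z + (lam k - c * (∑ i, v i * y (k+1) i)) *
            ((∑ i, v i * z i) - (∑ i, v i * y (k+1) i))) ≤
          (c/2) * t^2 * ((∑ i, v i * z i) - (∑ i, v i * y (k+1) i))^2 := by
      intro t ht0 ht1
      have hmem : (1-t) • y (k+1) + t • z ∈ Y :=
        hYconv (hymem k) hz (by linarith) ht0.le (by ring)
      have hmin := hymin k _ hmem
      have hφc := hφ.2 (Set.mem_univ (y (k+1))) (Set.mem_univ z)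
        (by linarith : (0:ℝ) ≤ 1 - t) ht0.le (by ring)
      simp only [smul_eq_mul] at hφc
      have hSlin : (∑ i, v i * ((1-t) • y (k+1) + t • z) i)
          = (1-t) * (∑ i, v i * y (k+1) i) + t * (∑ i, v i * z i) := by
        rw [Finset.mul_sum, Finset.mul_sum, ← Finset.sum_add_distrib]
        refine Finset.sum_congr rfl fun i _ => ?_
        simp only [Pi.add_apply, Pi.smul_apply, smul_eq_mul]
        ring
      rw [hSlin] at hmin
      nlinarith [hmin, hφc]
    -- conclude A ≤ 0
    have hA0 : φ (y (k+1)) - φ z + (lam k - c * (∑ i, v i * y (k+1) i)) *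
        ((∑ i, v i * z i) - (∑ i, v i * y (k+1) i)) ≤ 0 := by
      by_contra hA
      push_neg at hA
      set A := φ (y (k+1)) - φ z + (lam k - c * (∑ i, v i * y (k+1) i)) *
        ((∑ i, v i * z i) - (∑ i, v i * y (k+1) i)) with hAdef
      set B := ((∑ i, v i * z i) - (∑ i, v i * y (k+1) i))^2 with hBdef
      have hB : 0 ≤ B := sq_nonneg _
      have hcB : 0 < c * (B + 1) := by nlinarith
      set t := min 1 (A / (c * (B + 1))) with htdef
      have ht0 : 0 < t := lt_min one_pos (div_pos hA hcB)
      have ht1 : t ≤ 1 := min_le_left _ _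
      have h1 := hmain t ht0 ht1
      have h4 : t * A ≤ t * ((c/2) * t * B) := by nlinarith [h1]
      have h3 : A ≤ (c/2) * t * B := le_of_mul_le_mul_left h4 ht0
      have h2 : t * (c * (B + 1)) ≤ A := (le_div_iff₀ hcB).mp (min_le_right _ _)
      nlinarith [mul_pos hc ht0]
    nlinarith [hA0]
  -- one-step Fejér monotonicity with respect to lamstar
  have hstep : ∀ k : ℕ, (lam (k+1) - lamstar)^2 ≤ (lam k - lamstar)^2 := by
    intro k
    have hmin := hymin k ystar hys
    rw [hS0] at hmin
    have hs := hsad2 (y (k+1)) (hymem k)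
    rw [hS0] at hs
    rw [hlam k]
    nlinarith [hmin, hs, hc, sq_nonneg (∑ i, v i * y (k+1) i)]
  -- key quantitative inequality
  have h6 : ∀ k : ℕ, ∀ z ∈ Y, 2*c*(φ ystar) ≤
      2*c*(φ z - lam (k+1) * (∑ i, v i * z i)) +
        ((lam k - lamstar)^2 - (lam (k+1) - lamstar)^2) := by
    intro k z hz
    have hA := keyA k z hz
    have hs := hsad2 (y (k+1)) (hymem k)
    rw [hS0] at hs
    rw [hlam k]
    nlinarith [hA, hs, hc, sq_nonneg (∑ i, v i * y (k+1) i),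
      sq_nonneg (c * (∑ i, v i * y (k+1) i))]
  have hanti : Antitone (fun k => (lam k - lamstar)^2) := antitone_nat_of_succ_le hstep
  have hbdd : BddBelow (Set.range fun k => (lam k - lamstar)^2) := by
    refine ⟨0, ?_⟩
    rintro x ⟨k, rfl⟩
    positivity
  have hDt : Tendsto (fun k => (lam k - lamstar)^2) atTop
      (nhds (⨅ k, (lam k - lamstar)^2)) := tendsto_atTop_ciInf hanti hbdd
  have hEt : Tendsto (fun k => (lam k - lamstar)^2 - (lam (k+1) - lamstar)^2)
      atTop (nhds 0) := by
    have h2 : Tendsto (fun k => (lam (k+1) - lamstar)^2) atTop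
        (nhds (⨅ k, (lam k - lamstar)^2)) := by
      simpa [Function.comp_def] using hDt.comp (tendsto_add_atTop_nat 1)
    simpa using hDt.sub h2
  -- boundedness and a convergent subsequence
  have hbound : ∀ j : ℕ, lam (j+1) ∈
      Set.Icc (lamstar - |lam 0 - lamstar|) (lamstar + |lam 0 - lamstar|) := by
    intro j
    have h1 : (lam (j+1) - lamstar)^2 ≤ (lam 0 - lamstar)^2 :=
      hanti (Nat.zero_le (j+1))
    constructor <;>
      nlinarith [abs_nonneg (lam 0 - lamstar), sq_abs (lam 0 - lamstar)]
  obtain ⟨lbar, _, ψ, hψmono, hψtend⟩ := (isCompact_Icc).tendsto_subseq hbound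
  have t1 : Tendsto (fun j => lam (ψ j + 1)) atTop (nhds lbar) := by
    simpa [Function.comp_def] using hψtend
  -- (ystar, lbar) is a saddle point
  have hsad2' : ∀ z ∈ Y, φ ystar ≤ φ z - lbar * (∑ i, v i * z i) := by
    intro z hz
    have t2 : Tendsto (fun j => (lam (ψ j) - lamstar)^2 - (lam (ψ j + 1) - lamstar)^2)
        atTop (nhds 0) := by
      simpa [Function.comp_def] using hEt.comp hψmono.tendsto_atTop
    have hlim1 : Tendsto (fun j => 2*c*(φ z - lam (ψ j + 1) * (∑ i, v i * z i)) +
        ((lam (ψ j) - lamstar)^2 - (lam (ψ j + 1) - lamstar)^2)) atTop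
        (nhds (2*c*(φ z - lbar * (∑ i, v i * z i)) + 0)) :=
      ((tendsto_const_nhds.sub (t1.mul_const _)).const_mul (2*c)).add t2
    have hge : 2*c*(φ ystar) ≤ 2*c*(φ z - lbar * (∑ i, v i * z i)) + 0 :=
      ge_of_tendsto' hlim1 (fun j => h6 (ψ j) z hz)
    have h2c : (0:ℝ) < 2*c := by linarith
    have := le_of_mul_le_mul_left
      (by linarith [hge] : (2*c) * (φ ystar) ≤ (2*c) * (φ z - lbar * (∑ i, v i * z i))) h2c
    exact this
  -- Fejér monotonicity with respect to lbar
  have hstep' : ∀ k : ℕ, (lam (k+1) - lbar)^2 ≤ (lam k - lbar)^2 := by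
    intro k
    have hmin := hymin k ystar hys
    rw [hS0] at hmin
    have hs := hsad2' (y (k+1)) (hymem k)
    rw [hlam k]
    nlinarith [hmin, hs, hc, sq_nonneg (∑ i, v i * y (k+1) i)]
  refine ⟨lbar, ?_, ystar, hys, ?_, ?_⟩
  · rw [Metric.tendsto_atTop]
    intro ε hε
    obtain ⟨J, hJ⟩ := Metric.tendsto_atTop.mp t1 ε hε
    refine ⟨ψ J + 1, fun m hm => ?_⟩
    have hA' : Antitone (fun k => (lam k - lbar)^2) := antitone_nat_of_succ_le hstep'
    have h1 : (lam m - lbar)^2 ≤ (lam (ψ J + 1) - lbar)^2 := hA' hm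
    have h2 := hJ J le_rfl
    rw [Real.dist_eq] at h2 ⊢
    nlinarith [abs_nonneg (lam m - lbar), sq_abs (lam m - lbar),
      sq_abs (lam (ψ J + 1) - lbar), abs_nonneg (lam (ψ J + 1) - lbar), h2, hε]
  · intro lam'
    rw [hS0]
    simp
  · intro z hz
    have := hsad2' z hz
    rw [hS0]
    linarith
end
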